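/- arXiv:2108.10857 — 7 statements merged into one kernel-verified Lean document; each statement's English description precedes it below -/
import Mathlib

section
/- Let u₀ : ℝ → ℝ be infinitely differentiable. Define a sequence of smooth functions H_k : ℝ² → ℝ by H₀ = 1 and H_{k+1}(x, y) = ∫_0^1 u^k · (∂_x² H_k + u₀ · H_k)(y + u(x − y), y) du, so that H_{k+1} is the unique smooth solution of (k+1) H_{k+1}(x,y) + (x−y) ∂_x H_{k+1}(x,y) = ∂_x² H_k(x,y) + u₀(x) H_k(x,y). Then H_k(x, y) = H_k(y, x) for every k and all x, y ∈ ℝ. -/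
set_option maxHeartbeats 2000000
set_option synthInstance.maxHeartbeats 400000

open intervalIntegral MeasureTheory Set



noncomputable def PD1 (f : ℝ → ℝ → ℝ) : ℝ → ℝ → ℝ := fun a b => deriv (fun s => f s b) a
noncomputable def PD2 (f : ℝ → ℝ → ℝ) : ℝ → ℝ → ℝ := fun a b => deriv (fun t => f a t) b

section SmLemmas

variable {f : ℝ → ℝ → ℝ}

lemma hasDerivAt_line1 (a b : ℝ) : HasDerivAt (fun s : ℝ => (s, b)) ((1:ℝ), (0:ℝ)) a :=
  (hasDerivAt_id a).prodMk (hasDerivAt_const a b)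

lemma hasDerivAt_line2 (a b : ℝ) : HasDerivAt (fun t : ℝ => (a, t)) ((0:ℝ), (1:ℝ)) b :=
  (hasDerivAt_const b a).prodMk (hasDerivAt_id b)

variable (hf : ContDiff ℝ (⊤ : ℕ∞) (Function.uncurry f))
include hf

lemma sm_hasFDerivAt (q : ℝ × ℝ) :
    HasFDerivAt (Function.uncurry f) (fderiv ℝ (Function.uncurry f) q) q :=
  (hf.differentiable (by simp) q).hasFDerivAt

lemma sm_hd1 (a b : ℝ) :
    HasDerivAt (fun s => f s b) (fderiv ℝ (Function.uncurry f) (a, b) (1, 0)) a :=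
  by have := (sm_hasFDerivAt hf (a, b)).comp_hasDerivAt a (hasDerivAt_line1 a b); exact this

lemma sm_hd2 (a b : ℝ) :
    HasDerivAt (fun t => f a t) (fderiv ℝ (Function.uncurry f) (a, b) (0, 1)) b :=
  (sm_hasFDerivAt hf (a, b)).comp_hasDerivAt b (hasDerivAt_line2 a b)

lemma pd1_eq (a b : ℝ) : PD1 f a b = fderiv ℝ (Function.uncurry f) (a, b) (1, 0) :=
  (sm_hd1 hf a b).deriv

lemma pd2_eq (a b : ℝ) : PD2 f a b = fderiv ℝ (Function.uncurry f) (a, b) (0, 1) :=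
  (sm_hd2 hf a b).deriv

lemma sm_hasDerivAt_pd1 (a b : ℝ) : HasDerivAt (fun s => f s b) (PD1 f a b) a := by
  rw [pd1_eq hf]; exact sm_hd1 hf a b

lemma sm_hasDerivAt_pd2 (a b : ℝ) : HasDerivAt (fun t => f a t) (PD2 f a b) b := by
  rw [pd2_eq hf]; exact sm_hd2 hf a b

lemma sm_pd1 : ContDiff ℝ (⊤ : ℕ∞) (Function.uncurry (PD1 f)) := by
  have h : Function.uncurry (PD1 f) = fun q : ℝ × ℝ => fderiv ℝ (Function.uncurry f) q (1, 0) := by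
    funext q
    exact pd1_eq hf q.1 q.2
  rw [h]
  exact (hf.fderiv_right (by exact_mod_cast le_top)).clm_apply contDiff_const

lemma sm_pd2 : ContDiff ℝ (⊤ : ℕ∞) (Function.uncurry (PD2 f)) := by
  have h : Function.uncurry (PD2 f) = fun q : ℝ × ℝ => fderiv ℝ (Function.uncurry f) q (0, 1) := by
    funext q
    exact pd2_eq hf q.1 q.2
  rw [h]
  exact (hf.fderiv_right (by exact_mod_cast le_top)).clm_apply contDiff_const

lemma sm_clairaut : PD1 (PD2 f) = PD2 (PD1 f) := by
  funext a b
  have hf' : ∀ q : ℝ × ℝ, HasFDerivAt (Function.uncurry f)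
      (fderiv ℝ (Function.uncurry f) q) q := sm_hasFDerivAt hf
  have hfd2 : HasFDerivAt (fderiv ℝ (Function.uncurry f))
      (fderiv ℝ (fderiv ℝ (Function.uncurry f)) (a, b)) (a, b) :=
    (((hf.fderiv_right (m := ((⊤:ℕ∞) : WithTop ℕ∞)) (by exact_mod_cast le_top)).differentiable
      (by simp)) (a, b)).hasFDerivAt
  have hsymm := second_derivative_symmetric hf' hfd2
  have h1 : PD1 (PD2 f) a b = (fderiv ℝ (fderiv ℝ (Function.uncurry f)) (a, b)) (1, 0) (0, 1) := by
    have hcomp : HasDerivAt (fun s => fderiv ℝ (Function.uncurry f) (s, b))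
        ((fderiv ℝ (fderiv ℝ (Function.uncurry f)) (a, b)) (1, 0)) a :=
      hfd2.comp_hasDerivAt a (hasDerivAt_line1 a b)
    have happ : HasDerivAt (fun s => fderiv ℝ (Function.uncurry f) (s, b) (0, 1))
        ((fderiv ℝ (fderiv ℝ (Function.uncurry f)) (a, b)) (1, 0) (0, 1)) a := by
      have := hcomp.clm_apply (hasDerivAt_const a ((0:ℝ), (1:ℝ)))
      simpa using this
    have heq : (fun s => PD2 f s b) = fun s => fderiv ℝ (Function.uncurry f) (s, b) (0, 1) := by
      funext s
      exact pd2_eq hf s b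
    rw [PD1, heq]
    exact happ.deriv
  have h2 : PD2 (PD1 f) a b = (fderiv ℝ (fderiv ℝ (Function.uncurry f)) (a, b)) (0, 1) (1, 0) := by
    have hcomp : HasDerivAt (fun t => fderiv ℝ (Function.uncurry f) (a, t))
        ((fderiv ℝ (fderiv ℝ (Function.uncurry f)) (a, b)) (0, 1)) b :=
      hfd2.comp_hasDerivAt b (hasDerivAt_line2 a b)
    have happ : HasDerivAt (fun t => fderiv ℝ (Function.uncurry f) (a, t) (1, 0))
        ((fderiv ℝ (fderiv ℝ (Function.uncurry f)) (a, b)) (0, 1) (1, 0)) b := by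
      have := hcomp.clm_apply (hasDerivAt_const b ((1:ℝ), (0:ℝ)))
      simpa using this
    have heq : (fun t => PD1 f a t) = fun t => fderiv ℝ (Function.uncurry f) (a, t) (1, 0) := by
      funext t
      exact pd1_eq hf a t
    rw [PD2, heq]
    exact happ.deriv
  rw [h1, h2, hsymm]

/-- chain rule for smooth bivariate function along a curve -/
lemma sm_comp2 {g1 g2 : ℝ → ℝ} {d1 d2 t : ℝ}
    (hg1 : HasDerivAt g1 d1 t) (hg2 : HasDerivAt g2 d2 t) :
    HasDerivAt (fun t => f (g1 t) (g2 t))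
      (d1 * PD1 f (g1 t) (g2 t) + d2 * PD2 f (g1 t) (g2 t)) t := by
  have hcurve : HasDerivAt (fun t => (g1 t, g2 t)) (d1, d2) t := hg1.prodMk hg2
  have hmain := (sm_hasFDerivAt hf (g1 t, g2 t)).comp_hasDerivAt t hcurve
  have hval : fderiv ℝ (Function.uncurry f) (g1 t, g2 t) (d1, d2) =
      d1 * PD1 f (g1 t) (g2 t) + d2 * PD2 f (g1 t) (g2 t) := by
    rw [pd1_eq hf, pd2_eq hf]
    have h : (d1, d2) = d1 • ((1:ℝ), (0:ℝ)) + d2 • ((0:ℝ), (1:ℝ)) := by simp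
    rw [h, map_add, ContinuousLinearMap.map_smul, ContinuousLinearMap.map_smul]
    simp [smul_eq_mul]
  rwa [hval] at hmain

end SmLemmas



/-- differentiation under the interval integral, 1-dim parameter -/
lemma dui (F DF : ℝ → ℝ → ℝ) (hF : Continuous (Function.uncurry F))
    (hDF : Continuous (Function.uncurry DF))
    (hd : ∀ u t, HasDerivAt (fun t' => F u t') (DF u t) t) (t₀ : ℝ) :
    HasDerivAt (fun t => ∫ u in (0:ℝ)..1, F u t) (∫ u in (0:ℝ)..1, DF u t₀) t₀ := by
  obtain ⟨C, hC⟩ : ∃ C, ∀ q ∈ (uIcc (0:ℝ) 1) ×ˢ Metric.closedBall t₀ 1,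
      ‖Function.uncurry DF q‖ ≤ C :=
    ((isCompact_uIcc).prod (isCompact_closedBall t₀ 1)).exists_bound_of_continuousOn
      hDF.continuousOn
  have := intervalIntegral.hasDerivAt_integral_of_dominated_loc_of_deriv_le
    (F := fun t u => F u t) (F' := fun t u => DF u t) (bound := fun _ => C) (s := Metric.ball t₀ 1)
    (μ := volume) (a := 0) (b := 1) (x₀ := t₀) (Metric.ball_mem_nhds t₀ one_pos)
    (by filter_upwards with x
        exact (hF.comp (Continuous.prodMk_left x)).aestronglyMeasurable)
    ((hF.comp (Continuous.prodMk_left t₀)).intervalIntegrable 0 1)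
    ((hDF.comp (Continuous.prodMk_left t₀)).aestronglyMeasurable)
    (by filter_upwards with u hu x hx
        exact hC (u, x) ⟨uIoc_subset_uIcc hu, Metric.ball_subset_closedBall hx⟩)
    intervalIntegrable_const
    (by filter_upwards with u _ x _; exact hd u x)
  exact this.2

lemma ftc01 {W W' : ℝ → ℝ} (hW : ∀ u, HasDerivAt W (W' u) u) (h : Continuous W') :
    ∫ u in (0:ℝ)..1, W' u = W 1 - W 0 :=
  intervalIntegral.integral_eq_sub_of_hasDerivAt (fun u _ => hW u) (h.intervalIntegrable 0 1)

lemma keyE (p q : ℕ) (hpq : p < q) (φ : ℝ → ℝ) (hφ : Continuous φ) :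
    ∫ u in (0:ℝ)..1, u^p * (∫ v in (0:ℝ)..1, v^q * φ (u*v)) =
      ((q:ℝ) - p)⁻¹ * ∫ u in (0:ℝ)..1, (u^p - u^q) * φ u := by
  set g : ℝ → ℝ := fun u => ∫ v in (0:ℝ)..1, v^q * φ (u*v) with hg
  have hgc : Continuous g := by
    apply continuous_parametric_intervalIntegral_of_continuous'
      (f := fun (u : ℝ) (v : ℝ) => v^q * φ (u*v))
    exact ((continuous_snd.pow q).mul (hφ.comp (continuous_fst.mul continuous_snd)))
  set Ψ : ℝ → ℝ := fun u => ∫ t in (0:ℝ)..u, t^q * φ t with hΨ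
  have hΨd : ∀ u : ℝ, HasDerivAt Ψ (u^q * φ u) u := by
    intro u
    exact intervalIntegral.integral_hasDerivAt_right
      (((continuous_pow q).mul hφ).intervalIntegrable 0 u)
      (((continuous_pow q).mul hφ).stronglyMeasurableAtFilter _ _)
      (((continuous_pow q).mul hφ).continuousAt)
  have hkey : ∀ u : ℝ, u^(q+1) * g u = Ψ u := by
    intro u
    rcases eq_or_ne u 0 with h0 | h0
    · simp [h0, hg, hΨ]
    · have hsub : ∫ v in (0:ℝ)..1, (u*v)^q * φ (u*v) = u⁻¹ * Ψ u := by
        have := intervalIntegral.integral_comp_mul_left (a := 0) (b := 1)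
          (fun t => t^q * φ t) h0
        simpa [smul_eq_mul] using this
      have hpull : ∫ v in (0:ℝ)..1, (u*v)^q * φ (u*v) = u^q * g u := by
        rw [hg]
        rw [← intervalIntegral.integral_const_mul]
        apply intervalIntegral.integral_congr
        intro v _
        ring
      have h2 : u^q * g u = u⁻¹ * Ψ u := by rw [← hpull, hsub]
      rw [pow_succ]
      field_simp at h2
      linear_combination h2
  set W : ℝ → ℝ := fun u => u^(p+1) * g u with hW
  have hWc : Continuous W := (continuous_pow (p+1)).mul hgc
  have hWd : ∀ u ∈ Ioo (0:ℝ) 1,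
      HasDerivAt W (((p:ℝ) - q) * (u^p * g u) + u^p * φ u) u := by
    intro u hu
    have hu0 : u ≠ 0 := ne_of_gt hu.1
    set V : ℝ → ℝ := fun x => x^((p:ℤ) - (q:ℤ) ) * Ψ x with hV
    have hVd : HasDerivAt V
        ((((p:ℤ) - q : ℤ) : ℝ) * u^((p:ℤ) - q - 1) * Ψ u + u^((p:ℤ)-q) * (u^q * φ u)) u :=
      (hasDerivAt_zpow ((p:ℤ) - q) u (Or.inl hu0)).mul (hΨd u)
    have heq : ∀ x : ℝ, x ≠ 0 → W x = V x := by
      intro x hx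
      show x^(p+1) * g x = x^((p:ℤ) - (q:ℤ)) * Ψ x
      rw [← hkey x]
      have e1 : (x:ℝ)^(q+1) = x^(((q:ℤ))+1) := by
        rw [← zpow_natCast x (q+1)]; norm_num
      have e2 : (x:ℝ)^(p+1) = x^(((p:ℤ))+1) := by
        rw [← zpow_natCast x (p+1)]; norm_num
      rw [e1, e2, ← mul_assoc, ← zpow_add₀ hx,
        show (p:ℤ) - (q:ℤ) + ((q:ℤ) + 1) = (p:ℤ) + 1 by ring]
    have hWV : W =ᶠ[nhds u] V := by
      filter_upwards [compl_singleton_mem_nhds hu0] with x hx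
      exact heq x hx
    have hval : (((p:ℤ) - q : ℤ) : ℝ) * u^((p:ℤ) - q - 1) * Ψ u + u^((p:ℤ)-q) * (u^q * φ u)
        = ((p:ℝ) - q) * (u^p * g u) + u^p * φ u := by
      rw [← hkey u]
      have h1 : (u:ℝ)^((p:ℤ) - q - 1) * u^(q+1) = u^p := by
        rw [show (u:ℝ)^(q+1) = u^((q:ℤ)+1) by norm_cast, ← zpow_add₀ hu0]
        rw [show (p:ℤ) - q - 1 + (q + 1) = (p:ℤ) by ring]
        norm_cast
      have h2 : (u:ℝ)^((p:ℤ) - q) * u^q = u^p := by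
        rw [show (u:ℝ)^q = u^((q:ℤ)) by norm_cast, ← zpow_add₀ hu0]
        rw [show (p:ℤ) - q + q = (p:ℤ) by ring]
        norm_cast
      push_cast
      calc ((p:ℝ) - q) * u^((p:ℤ) - q - 1) * (u^(q+1) * g u) + u^((p:ℤ)-q) * (u^q * φ u)
          = ((p:ℝ) - q) * ((u^((p:ℤ) - q - 1) * u^(q+1)) * g u)
            + (u^((p:ℤ)-q) * u^q) * φ u := by ring
        _ = ((p:ℝ) - q) * (u^p * g u) + u^p * φ u := by rw [h1, h2]
    rw [← hval]
    exact hVd.congr_of_eventuallyEq hWV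
  have hDc : Continuous (fun u : ℝ => ((p:ℝ) - q) * (u^p * g u) + u^p * φ u) := by
    exact (continuous_const.mul ((continuous_pow p).mul hgc)).add ((continuous_pow p).mul hφ)
  have hftc := intervalIntegral.integral_eq_sub_of_hasDeriv_right_of_le (f := W)
    (f' := fun u => ((p:ℝ) - q) * (u^p * g u) + u^p * φ u) zero_le_one
    hWc.continuousOn (fun x hx => ((hWd x hx).hasDerivWithinAt))
    (hDc.intervalIntegrable 0 1)
  have hW1 : W 1 = g 1 := by simp [hW]
  have hW0 : W 0 = 0 := by simp [hW]
  rw [hW1, hW0, sub_zero] at hftc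
  have hsplit : ∫ u in (0:ℝ)..1, (((p:ℝ) - q) * (u^p * g u) + u^p * φ u) =
      ((p:ℝ) - q) * (∫ u in (0:ℝ)..1, u^p * g u) + ∫ u in (0:ℝ)..1, u^p * φ u := by
    rw [intervalIntegral.integral_add (((continuous_const.fun_mul ((continuous_pow p).fun_mul hgc))).intervalIntegrable 0 1)
      (((continuous_pow p).fun_mul hφ).intervalIntegrable 0 1),
      intervalIntegral.integral_const_mul]
  rw [hsplit] at hftc
  have hg1 : g 1 = ∫ v in (0:ℝ)..1, v^q * φ v := by
    rw [hg]
    apply intervalIntegral.integral_congr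
    intro v _
    simp
  have hne : ((p:ℝ) - q) ≠ 0 := by
    have : (p:ℝ) < q := by exact_mod_cast hpq
    linarith
  have hsplit2 : ∫ u in (0:ℝ)..1, (u^p - u^q) * φ u =
      (∫ u in (0:ℝ)..1, u^p * φ u) - ∫ u in (0:ℝ)..1, u^q * φ u := by
    rw [← intervalIntegral.integral_sub (((continuous_pow p).fun_mul hφ).intervalIntegrable 0 1)
      (((continuous_pow q).fun_mul hφ).intervalIntegrable 0 1)]
    apply intervalIntegral.integral_congr
    intro v _
    ring
  rw [hg1] at hftc
  rw [hsplit2]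
  have hfold : (∫ u in (0:ℝ)..1, u^p * ∫ v in (0:ℝ)..1, v^q * φ (u*v))
      = ∫ u in (0:ℝ)..1, u^p * g u := rfl
  rw [hfold]
  have hc : ((q:ℝ) - p) ≠ 0 := by
    have : (p:ℝ) < q := by exact_mod_cast hpq
    linarith
  rw [eq_inv_mul_iff_mul_eq₀ hc]
  linear_combination -hftc



section SPI
variable {P : Type} [NormedAddCommGroup P] [NormedSpace ℝ P] [ProperSpace P]

private lemma spi_nat (n : ℕ) :
    ∀ {E : Type} [NormedAddCommGroup E] [NormedSpace ℝ E] [CompleteSpace E] (F : ℝ → P → E),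
      ContDiff ℝ n (Function.uncurry F) →
      ContDiff ℝ n (fun p : P => ∫ u in (0:ℝ)..1, F u p) := by
  induction n with
  | zero =>
    intro E _ _ _ F hF
    have h0 : ((0:ℕ) : WithTop ℕ∞) = 0 := by norm_cast
    rw [h0, contDiff_zero] at hF ⊢
    exact continuous_parametric_intervalIntegral_of_continuous'
      (f := fun p u => F u p) (hF.comp continuous_swap) 0 1
  | succ n IH =>
    intro E _ _ _ F hF
    set F' : ℝ → P → (P →L[ℝ] E) := fun u p =>
      (fderiv ℝ (Function.uncurry F) (u, p)).comp (ContinuousLinearMap.inr ℝ ℝ P) with hF'def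
    have hFdiff : Differentiable ℝ (Function.uncurry F) :=
      hF.differentiable (by simp)
    have hpart : ∀ (u : ℝ) (p : P), HasFDerivAt (F u) (F' u p) p := by
      intro u p
      exact (hFdiff (u, p)).hasFDerivAt.comp p (hasFDerivAt_prodMk_right u p)
    have hF' : ContDiff ℝ n (Function.uncurry F') := by
      have h1 : ContDiff ℝ n (fderiv ℝ (Function.uncurry F)) :=
        hF.fderiv_right (by exact_mod_cast le_rfl)
      exact (((ContinuousLinearMap.compL ℝ P (ℝ × P) E).flip
        (ContinuousLinearMap.inr ℝ ℝ P)).contDiff).comp h1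
    have hcont : Continuous (Function.uncurry F) := hF.continuous
    have hcont' : Continuous (Function.uncurry F') := hF'.continuous
    have hdiff : ∀ p₀ : P, HasFDerivAt (fun p : P => ∫ u in (0:ℝ)..1, F u p)
        (∫ u in (0:ℝ)..1, F' u p₀) p₀ := by
      intro p₀
      obtain ⟨C, hC⟩ : ∃ C, ∀ q ∈ (uIcc (0:ℝ) 1) ×ˢ Metric.closedBall p₀ 1,
          ‖Function.uncurry F' q‖ ≤ C :=
        ((isCompact_uIcc).prod (isCompact_closedBall p₀ 1)).exists_bound_of_continuousOn
          hcont'.continuousOn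
      apply intervalIntegral.hasFDerivAt_integral_of_dominated_of_fderiv_le
        (F := fun p u => F u p) (F' := fun p u => F' u p) (bound := fun _ => C)
        (s := Metric.ball p₀ 1) (Metric.ball_mem_nhds p₀ one_pos)
      · filter_upwards with x
        exact (hcont.comp (Continuous.prodMk_left x)).aestronglyMeasurable
      · exact (hcont.comp (Continuous.prodMk_left p₀)).intervalIntegrable 0 1
      · exact (hcont'.comp (Continuous.prodMk_left p₀)).aestronglyMeasurable
      · filter_upwards with u hu x hx
        exact hC (u, x) ⟨uIoc_subset_uIcc hu, Metric.ball_subset_closedBall hx⟩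
      · exact intervalIntegrable_const
      · filter_upwards with u _ x _
        exact hpart u x
    have hcast : (((n:ℕ) + 1 : ℕ) : WithTop ℕ∞) = ((n : WithTop ℕ∞) + 1) := by push_cast; ring
    rw [hcast, contDiff_succ_iff_fderiv]
    refine ⟨fun p => (hdiff p).differentiableAt, ?_, ?_⟩
    · intro h; simp at h
    · rw [show fderiv ℝ (fun p : P => ∫ u in (0:ℝ)..1, F u p) = fun p => ∫ u in (0:ℝ)..1, F' u p
        from funext fun p => (hdiff p).fderiv]
      exact IH F' hF'

lemma spi_top {E : Type} [NormedAddCommGroup E] [NormedSpace ℝ E] [CompleteSpace E]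
    (F : ℝ → P → E) (hF : ContDiff ℝ (⊤ : ℕ∞) (Function.uncurry F)) :
    ContDiff ℝ (⊤ : ℕ∞) (fun p : P => ∫ u in (0:ℝ)..1, F u p) := by
  rw [contDiff_infty] at hF ⊢
  exact fun n => spi_nat n F (hF n)

end SPI

section Main

variable (u₀ : ℝ → ℝ) (hu₀ : ContDiff ℝ (⊤ : ℕ∞) u₀)
  (H : ℕ → ℝ → ℝ → ℝ)
  (hH0 : ∀ x y : ℝ, H 0 x y = 1)
  (hHk : ∀ (k : ℕ) (x y : ℝ), H (k + 1) x y = ∫ u in (0:ℝ)..1, u ^ k *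
    (iteratedDeriv 2 (fun x' => H k x' y) (y + u * (x - y)) +
      u₀ (y + u * (x - y)) * H k (y + u * (x - y)) y))

/-- the operator L applied in the first slot -/
noncomputable def AAop (u₀ : ℝ → ℝ) (h : ℝ → ℝ → ℝ) : ℝ → ℝ → ℝ :=
  fun s b => PD1 (PD1 h) s b + u₀ s * h s b

lemma pd11_eq_iteratedDeriv (h : ℝ → ℝ → ℝ) (s b : ℝ) :
    iteratedDeriv 2 (fun x' => h x' b) s = PD1 (PD1 h) s b := by
  rw [iteratedDeriv_succ, iteratedDeriv_one]
  rfl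

include hHk in
lemma hrec : ∀ (k : ℕ) (a b : ℝ),
    H (k+1) a b = ∫ u in (0:ℝ)..1, u ^ k * AAop u₀ (H k) (b + u*(a-b)) b := by
  intro k a b
  rw [hHk k a b]
  apply intervalIntegral.integral_congr
  intro u _
  show u ^ k * (iteratedDeriv 2 (fun x' => H k x' b) (b + u * (a - b))
      + u₀ (b + u * (a - b)) * H k (b + u * (a - b)) b)
    = u ^ k * AAop u₀ (H k) (b + u * (a - b)) b
  rw [pd11_eq_iteratedDeriv]
  rfl

include hu₀ in
lemma smAA (h : ℝ → ℝ → ℝ) (hh : ContDiff ℝ (⊤ : ℕ∞) (Function.uncurry h)) :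
    ContDiff ℝ (⊤ : ℕ∞) (Function.uncurry (AAop u₀ h)) := by
  have h2 : Function.uncurry (AAop u₀ h) = fun q : ℝ × ℝ =>
      Function.uncurry (PD1 (PD1 h)) q + u₀ q.1 * Function.uncurry h q := by
    funext q; rfl
  rw [h2]
  exact (sm_pd1 (sm_pd1 hh)).add ((hu₀.comp contDiff_fst).mul hh)

include hu₀ hH0 hHk in
lemma hsm : ∀ k, ContDiff ℝ (⊤ : ℕ∞) (Function.uncurry (H k)) := by
  intro k
  induction k with
  | zero =>
    have : Function.uncurry (H 0) = fun _ : ℝ × ℝ => (1:ℝ) := by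
      funext q; exact hH0 q.1 q.2
    rw [this]; exact contDiff_const
  | succ k IH =>
    have hA : ContDiff ℝ (⊤ : ℕ∞) (Function.uncurry (AAop u₀ (H k))) := smAA u₀ hu₀ (H k) IH
    have heq : Function.uncurry (H (k+1)) = fun p : ℝ × ℝ =>
        ∫ u in (0:ℝ)..1, u ^ k * AAop u₀ (H k) (p.2 + u*(p.1-p.2)) p.2 := by
      funext q
      exact hrec u₀ H hHk k q.1 q.2
    rw [heq]
    apply spi_top
    have hmap : ContDiff ℝ (⊤ : ℕ∞) (fun w : ℝ × (ℝ × ℝ) =>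
        ((w.2.2 + w.1 * (w.2.1 - w.2.2)), w.2.2)) := by fun_prop
    have : Function.uncurry (fun (u : ℝ) (p : ℝ × ℝ) =>
        u ^ k * AAop u₀ (H k) (p.2 + u*(p.1-p.2)) p.2) = fun w : ℝ × (ℝ × ℝ) =>
        w.1 ^ k * Function.uncurry (AAop u₀ (H k)) ((w.2.2 + w.1 * (w.2.1 - w.2.2)), w.2.2) := by
      funext w; rfl
    rw [this]
    exact (contDiff_fst.pow k).mul (hA.comp hmap)

/-- slanted differentiation under the integral: derivative in the base point -/
lemma dui_slant (f : ℝ → ℝ → ℝ) (hf : ContDiff ℝ (⊤ : ℕ∞) (Function.uncurry f))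
    (k : ℕ) (a t₀ : ℝ) :
    HasDerivAt (fun t => ∫ u in (0:ℝ)..1, u ^ k * f (t + u*(a-t)) t)
      (∫ u in (0:ℝ)..1, u ^ k * ((1-u) * PD1 f (t₀ + u*(a-t₀)) t₀
        + PD2 f (t₀ + u*(a-t₀)) t₀)) t₀ := by
  apply dui (F := fun (u t : ℝ) => u ^ k * f (t + u*(a-t)) t)
    (DF := fun (u t : ℝ) => u ^ k * ((1-u) * PD1 f (t + u*(a-t)) t + PD2 f (t + u*(a-t)) t))
  · have : Function.uncurry (fun (u t : ℝ) => u ^ k * f (t + u*(a-t)) t) =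
        fun w : ℝ × ℝ => w.1 ^ k * Function.uncurry f ((w.2 + w.1*(a-w.2)), w.2) := by
      funext w; rfl
    rw [this]
    exact ((continuous_fst.pow k).mul (hf.continuous.comp (by fun_prop)))
  · have : Function.uncurry (fun (u t : ℝ) => u ^ k * ((1-u) * PD1 f (t + u*(a-t)) t
        + PD2 f (t + u*(a-t)) t)) = fun w : ℝ × ℝ => w.1 ^ k *
        ((1-w.1) * Function.uncurry (PD1 f) ((w.2 + w.1*(a-w.2)), w.2)
          + Function.uncurry (PD2 f) ((w.2 + w.1*(a-w.2)), w.2)) := by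
      funext w; rfl
    rw [this]
    apply (continuous_fst.pow k).mul
    exact (((continuous_const.sub continuous_fst).mul
      ((sm_pd1 hf).continuous.comp (by fun_prop))).add
      ((sm_pd2 hf).continuous.comp (by fun_prop)))
  · intro u t
    have hg1 : HasDerivAt (fun t : ℝ => t + u*(a-t)) (1-u) t := by
      have := (hasDerivAt_id t).add (((hasDerivAt_const t a).sub (hasDerivAt_id t)).const_mul u)
      refine this.congr_deriv ?_
      ring
    have hcomp := sm_comp2 hf hg1 (hasDerivAt_id t)
    have := hcomp.const_mul (u ^ k)
    refine this.congr_deriv ?_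
    simp only [id_eq]
    ring

/-- differentiation under the integral along the ray -/
lemma dui_ray (f : ℝ → ℝ → ℝ) (hf : ContDiff ℝ (⊤ : ℕ∞) (Function.uncurry f))
    (k : ℕ) (b s₀ : ℝ) :
    HasDerivAt (fun s => ∫ u in (0:ℝ)..1, u ^ k * f (b + u*(s-b)) b)
      (∫ u in (0:ℝ)..1, u ^ k * (u * PD1 f (b + u*(s₀-b)) b)) s₀ := by
  apply dui (F := fun (u s : ℝ) => u ^ k * f (b + u*(s-b)) b)
    (DF := fun (u s : ℝ) => u ^ k * (u * PD1 f (b + u*(s-b)) b))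
  · have : Function.uncurry (fun (u s : ℝ) => u ^ k * f (b + u*(s-b)) b) =
        fun w : ℝ × ℝ => w.1 ^ k * Function.uncurry f ((b + w.1*(w.2-b)), b) := by
      funext w; rfl
    rw [this]
    exact ((continuous_fst.pow k).mul (hf.continuous.comp (by fun_prop)))
  · have : Function.uncurry (fun (u s : ℝ) => u ^ k * (u * PD1 f (b + u*(s-b)) b)) =
        fun w : ℝ × ℝ => w.1 ^ k *
          (w.1 * Function.uncurry (PD1 f) ((b + w.1*(w.2-b)), b)) := by
      funext w; rfl
    rw [this]
    exact (continuous_fst.pow k).mul (continuous_fst.mul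
      ((sm_pd1 hf).continuous.comp (by fun_prop)))
  · intro u s
    have hg1 : HasDerivAt (fun s : ℝ => b + u*(s-b)) u s := by
      have := (hasDerivAt_const s b).add (((hasDerivAt_id s).sub (hasDerivAt_const s b)).const_mul u)
      refine this.congr_deriv ?_
      ring
    have hcomp := sm_comp2 hf hg1 (hasDerivAt_const s b)
    have := hcomp.const_mul (u ^ k)
    refine this.congr_deriv ?_
    ring


lemma isplit (c d : ℝ) (f g : ℝ → ℝ) (hf : Continuous f) (hg : Continuous g) :
    ∫ u in (0:ℝ)..1, (c * f u + d * g u) =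
      c * (∫ u in (0:ℝ)..1, f u) + d * ∫ u in (0:ℝ)..1, g u := by
  rw [intervalIntegral.integral_add ((continuous_const.fun_mul hf).intervalIntegrable 0 1)
    ((continuous_const.fun_mul hg).intervalIntegrable 0 1),
    intervalIntegral.integral_const_mul, intervalIntegral.integral_const_mul]

include hu₀ hH0 hHk in
lemma T2base (a b : ℝ) : ((0:ℝ)+1) * H (0+1) a b + (b-a) * PD2 (H (0+1)) a b
    = PD2 (PD2 (H 0)) a b + u₀ b * H 0 a b := by
  have hU : Continuous u₀ := hu₀.continuous
  have hU' : Continuous (deriv u₀) := hu₀.continuous_deriv (by exact_mod_cast le_top)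
  -- A₀ = u₀
  have hf0 : AAop u₀ (H 0) = fun s _ => u₀ s := by
    funext s t
    have h1 : (fun x => H 0 x t) = fun _ => (1:ℝ) := funext (fun x => hH0 x t)
    have hP1 : PD1 (H 0) = fun _ _ => (0:ℝ) := by
      funext x y
      show deriv (fun s => H 0 s y) x = 0
      rw [funext (fun x => hH0 x y) (g := fun _ => (1:ℝ)), deriv_const]
    have hP11 : PD1 (PD1 (H 0)) s t = 0 := by
      show deriv (fun x => PD1 (H 0) x t) s = 0
      rw [hP1]
      exact deriv_const s 0
    show PD1 (PD1 (H 0)) s t + u₀ s * H 0 s t = u₀ s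
    rw [hP11, hH0]
    ring
  have hPP0 : PD2 (PD2 (H 0)) a b = 0 := by
    have hP2 : PD2 (H 0) = fun _ _ => (0:ℝ) := by
      funext x y
      show deriv (fun t => H 0 x t) y = 0
      rw [funext (fun t => hH0 x t) (g := fun _ => (1:ℝ)), deriv_const]
    show deriv (fun t => PD2 (H 0) a t) b = 0
    rw [hP2]
    exact deriv_const b 0
  set f₀ : ℝ → ℝ → ℝ := fun s _ => u₀ s with hf₀def
  have hsmf₀ : ContDiff ℝ (⊤ : ℕ∞) (Function.uncurry f₀) := hu₀.comp contDiff_fst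
  have hrec0 : ∀ x y : ℝ, H 1 x y = ∫ u in (0:ℝ)..1, u ^ 0 * f₀ (y + u*(x-y)) y := by
    intro x y
    rw [hrec u₀ H hHk 0 x y, hf0]
  -- the two base integrals
  have hI1 : H 1 a b = ∫ u in (0:ℝ)..1, u₀ (b + u*(a-b)) := by
    rw [hrec0 a b]
    apply intervalIntegral.integral_congr
    intro u _
    show u ^ 0 * f₀ (b + u*(a-b)) b = u₀ (b + u*(a-b))
    simp [hf₀def]
  have hPD1f₀ : ∀ s t : ℝ, PD1 f₀ s t = deriv u₀ s := fun s t => rfl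
  have hPD2f₀ : ∀ s t : ℝ, PD2 f₀ s t = 0 := by
    intro s t
    show deriv (fun _ => u₀ s) t = 0
    exact deriv_const t (u₀ s)
  have hI2 : PD2 (H 1) a b = ∫ u in (0:ℝ)..1, (1-u) * deriv u₀ (b + u*(a-b)) := by
    have hfun : (fun t => H 1 a t) = fun t => ∫ u in (0:ℝ)..1, u ^ 0 * f₀ (t + u*(a-t)) t :=
      funext (fun t => hrec0 a t)
    show deriv (fun t => H 1 a t) b = _
    rw [hfun, (dui_slant f₀ hsmf₀ 0 a b).deriv]
    apply intervalIntegral.integral_congr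
    intro u _
    show u ^ 0 * ((1-u) * PD1 f₀ (b + u*(a-b)) b + PD2 f₀ (b + u*(a-b)) b) = _
    rw [hPD1f₀, hPD2f₀]
    ring
  -- FTC identity
  have hW : ∀ u : ℝ, HasDerivAt (fun u => (1-u) * u₀ (b + u*(a-b)))
      ((-1) * u₀ (b + u*(a-b)) + (a-b) * ((1-u) * deriv u₀ (b + u*(a-b)))) u := by
    intro u
    have h1 : HasDerivAt (fun u : ℝ => 1-u) (-1) u := by
      simpa using (hasDerivAt_const u (1:ℝ)).fun_sub (hasDerivAt_id u)
    have hz : HasDerivAt (fun u : ℝ => b + u*(a-b)) (a-b) u := by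
      have := (hasDerivAt_const u b).fun_add ((hasDerivAt_id u).mul_const (a-b))
      simpa using this
    have hud : HasDerivAt u₀ (deriv u₀ (b + u*(a-b))) (b + u*(a-b)) :=
      ((hu₀.differentiable (by simp)) (b + u*(a-b))).hasDerivAt
    have h2 : HasDerivAt (fun u => u₀ (b + u*(a-b)))
        (deriv u₀ (b + u*(a-b)) * (a-b)) u := by
      have := HasDerivAt.comp u hud hz
      exact this
    have := h1.mul h2
    refine this.congr_deriv ?_
    ring
  have hftc : ∫ u in (0:ℝ)..1, ((-1) * u₀ (b + u*(a-b)) + (a-b) * ((1-u) * deriv u₀ (b + u*(a-b))))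
      = -(u₀ b) := by
    rw [ftc01 hW (by fun_prop)]
    norm_num
  have hsp := isplit (-1) (a-b) (fun u => u₀ (b + u*(a-b)))
    (fun u => (1-u) * deriv u₀ (b + u*(a-b))) (by fun_prop) (by fun_prop)
  rw [hsp] at hftc
  norm_num
  rw [hPP0, hH0, hI1, hI2]
  linear_combination -hftc


lemma isplit3 (c1 c2 c3 : ℝ) (f1 f2 f3 : ℝ → ℝ) (h1 : Continuous f1) (h2 : Continuous f2)
    (h3 : Continuous f3) :
    ∫ u in (0:ℝ)..1, (c1 * f1 u + c2 * f2 u + c3 * f3 u) =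
      c1 * (∫ u in (0:ℝ)..1, f1 u) + c2 * (∫ u in (0:ℝ)..1, f2 u)
        + c3 * ∫ u in (0:ℝ)..1, f3 u := by
  rw [intervalIntegral.integral_add (((continuous_const.fun_mul h1).fun_add
      (continuous_const.fun_mul h2)).intervalIntegrable 0 1)
    ((continuous_const.fun_mul h3).intervalIntegrable 0 1), isplit c1 c2 f1 f2 h1 h2,
    intervalIntegral.integral_const_mul]

lemma isplit4 (c1 c2 c3 c4 : ℝ) (f1 f2 f3 f4 : ℝ → ℝ) (h1 : Continuous f1) (h2 : Continuous f2)
    (h3 : Continuous f3) (h4 : Continuous f4) :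
    ∫ u in (0:ℝ)..1, (c1 * f1 u + c2 * f2 u + c3 * f3 u + c4 * f4 u) =
      c1 * (∫ u in (0:ℝ)..1, f1 u) + c2 * (∫ u in (0:ℝ)..1, f2 u)
        + c3 * (∫ u in (0:ℝ)..1, f3 u) + c4 * ∫ u in (0:ℝ)..1, f4 u := by
  rw [intervalIntegral.integral_add ((((continuous_const.fun_mul h1).fun_add
      (continuous_const.fun_mul h2)).fun_add (continuous_const.fun_mul h3)).intervalIntegrable 0 1)
    ((continuous_const.fun_mul h4).intervalIntegrable 0 1), isplit3 c1 c2 c3 f1 f2 f3 h1 h2 h3,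
    intervalIntegral.integral_const_mul]

lemma pd211 {g : ℝ → ℝ → ℝ} (hg : ContDiff ℝ (⊤ : ℕ∞) (Function.uncurry g)) :
    PD2 (PD1 (PD1 g)) = PD1 (PD1 (PD2 g)) := by
  calc PD2 (PD1 (PD1 g)) = PD1 (PD2 (PD1 g)) := (sm_clairaut (sm_pd1 hg)).symm
  _ = PD1 (PD1 (PD2 g)) := by rw [← sm_clairaut hg]


include hu₀ hH0 hHk in
lemma T2step (k : ℕ)
    (IH : ∀ s b : ℝ, ((k:ℝ)+1) * H (k+1) s b + (b-s) * PD2 (H (k+1)) s b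
      = PD2 (PD2 (H k)) s b + u₀ b * H k s b) (a b : ℝ) :
    ((k:ℝ)+2) * H (k+1+1) a b + (b-a) * PD2 (H (k+1+1)) a b
      = PD2 (PD2 (H (k+1))) a b + u₀ b * H (k+1) a b := by
  have smHk : ContDiff ℝ (⊤:ℕ∞) (Function.uncurry (H k)) := hsm u₀ hu₀ H hH0 hHk k
  have smH1 : ContDiff ℝ (⊤:ℕ∞) (Function.uncurry (H (k+1))) := hsm u₀ hu₀ H hH0 hHk (k+1)
  set Am := AAop u₀ (H k) with hAm
  set Ak := AAop u₀ (H (k+1)) with hAk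
  have smAm : ContDiff ℝ (⊤:ℕ∞) (Function.uncurry Am) := smAA u₀ hu₀ (H k) smHk
  have smAk : ContDiff ℝ (⊤:ℕ∞) (Function.uncurry Ak) := smAA u₀ hu₀ (H (k+1)) smH1
  have cal : ∀ (f : ℝ → ℝ → ℝ), Continuous (Function.uncurry f) →
      Continuous (fun u : ℝ => f (b + u*(a-b)) b) := by
    intro f hf
    have hm : Continuous (fun u : ℝ => ((b + u*(a-b)), b)) := by fun_prop
    exact hf.comp hm
  -- continuity of atoms
  have cg1 : Continuous (fun u : ℝ => u^k * Ak (b + u*(a-b)) b) :=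
    (continuous_pow k).mul (cal Ak smAk.continuous)
  have cg2 : Continuous (fun u : ℝ => u^(k+1) * Ak (b + u*(a-b)) b) :=
    (continuous_pow (k+1)).mul (cal Ak smAk.continuous)
  have cg3 : Continuous (fun u : ℝ => (1-u) * u^k * Ak (b + u*(a-b)) b) :=
    ((continuous_const.sub continuous_id).mul (continuous_pow k)).mul (cal Ak smAk.continuous)
  have cg4 : Continuous (fun u : ℝ => (1-u) * u^(k+1) * PD1 Ak (b + u*(a-b)) b) :=
    ((continuous_const.sub continuous_id).mul (continuous_pow (k+1))).mul
      (cal (PD1 Ak) (sm_pd1 smAk).continuous)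
  have cg5 : Continuous (fun u : ℝ => u^(k+1) * PD2 Ak (b + u*(a-b)) b) :=
    (continuous_pow (k+1)).mul (cal (PD2 Ak) (sm_pd2 smAk).continuous)
  -- (e1)
  have he1 : H (k+1+1) a b = ∫ u in (0:ℝ)..1, u^(k+1) * Ak (b + u*(a-b)) b :=
    hrec u₀ H hHk (k+1) a b
  -- (s1)
  have hs1 : PD2 (H (k+1+1)) a b =
      (∫ u in (0:ℝ)..1, (1-u) * u^(k+1) * PD1 Ak (b + u*(a-b)) b)
        + ∫ u in (0:ℝ)..1, u^(k+1) * PD2 Ak (b + u*(a-b)) b := by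
    have hfun : (fun t => H (k+1+1) a t) =
        fun t => ∫ u in (0:ℝ)..1, u^(k+1) * Ak (t + u*(a-t)) t :=
      funext (fun t => hrec u₀ H hHk (k+1) a t)
    show deriv (fun t => H (k+1+1) a t) b = _
    rw [hfun, (dui_slant Ak smAk (k+1) a b).deriv,
      ← intervalIntegral.integral_add (cg4.intervalIntegrable 0 1) (cg5.intervalIntegrable 0 1)]
    apply intervalIntegral.integral_congr
    intro u _
    show u^(k+1) * ((1-u) * PD1 Ak (b + u*(a-b)) b + PD2 Ak (b + u*(a-b)) b) = _
    ring
  -- (s2): FTC identity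
  have hg_ftc : ∀ u : ℝ, HasDerivAt (fun u => (1-u) * (u^(k+1) * Ak (b + u*(a-b)) b))
      ((-1) * (u^(k+1) * Ak (b + u*(a-b)) b)
        + (1-u) * (((k:ℝ)+1) * u^k * Ak (b + u*(a-b)) b
          + u^(k+1) * ((a-b) * PD1 Ak (b + u*(a-b)) b))) u := by
    intro u
    have h1 : HasDerivAt (fun u : ℝ => 1-u) (-1) u := by
      simpa using (hasDerivAt_const u (1:ℝ)).fun_sub (hasDerivAt_id u)
    have hz : HasDerivAt (fun u : ℝ => b + u*(a-b)) (a-b) u := by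
      simpa using (hasDerivAt_const u b).fun_add ((hasDerivAt_id u).mul_const (a-b))
    have hAz : HasDerivAt (fun u : ℝ => Ak (b+u*(a-b)) b)
        ((a-b) * PD1 Ak (b+u*(a-b)) b) u := by
      have := sm_comp2 smAk hz (hasDerivAt_const u b)
      refine this.congr_deriv ?_
      ring
    have hpow : HasDerivAt (fun u : ℝ => u^(k+1)) (((k:ℝ)+1) * u^k) u := by
      have := hasDerivAt_pow (k+1) u
      refine this.congr_deriv ?_
      push_cast
      ring
    exact h1.mul (hpow.mul hAz)
  have hftc2 : ∫ u in (0:ℝ)..1, ((-1) * (u^(k+1) * Ak (b+u*(a-b)) b)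
      + (1-u) * (((k:ℝ)+1) * u^k * Ak (b+u*(a-b)) b
        + u^(k+1) * ((a-b) * PD1 Ak (b+u*(a-b)) b))) = 0 := by
    have cW' : Continuous (fun u : ℝ => (-1) * (u^(k+1) * Ak (b+u*(a-b)) b)
        + (1-u) * (((k:ℝ)+1) * u^k * Ak (b+u*(a-b)) b
          + u^(k+1) * ((a-b) * PD1 Ak (b+u*(a-b)) b))) :=
      (continuous_const.mul cg2).add ((continuous_const.sub continuous_id).mul
        (((continuous_const.mul (continuous_pow k)).mul (cal Ak smAk.continuous)).add
          ((continuous_pow (k+1)).mul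
            (continuous_const.mul (cal (PD1 Ak) (sm_pd1 smAk).continuous)))))
    rw [ftc01 hg_ftc cW']
    simp [zero_pow]
  -- (e3)
  have he3 : (0:ℝ) = (-1) * (∫ u in (0:ℝ)..1, u^(k+1) * Ak (b+u*(a-b)) b)
      + ((k:ℝ)+1) * (∫ u in (0:ℝ)..1, (1-u) * u^k * Ak (b+u*(a-b)) b)
      + (a-b) * (∫ u in (0:ℝ)..1, (1-u) * u^(k+1) * PD1 Ak (b+u*(a-b)) b) := by
    calc (0:ℝ) = ∫ u in (0:ℝ)..1, ((-1) * (u^(k+1) * Ak (b+u*(a-b)) b)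
        + (1-u) * (((k:ℝ)+1) * u^k * Ak (b+u*(a-b)) b
          + u^(k+1) * ((a-b) * PD1 Ak (b+u*(a-b)) b))) := hftc2.symm
    _ = ∫ u in (0:ℝ)..1, ((-1) * (u^(k+1) * Ak (b+u*(a-b)) b)
          + ((k:ℝ)+1) * ((1-u) * u^k * Ak (b+u*(a-b)) b)
          + (a-b) * ((1-u) * u^(k+1) * PD1 Ak (b+u*(a-b)) b)) := by
        apply intervalIntegral.integral_congr
        intro u _
        ring
    _ = _ := isplit3 (-1) ((k:ℝ)+1) (a-b) _ _ _ cg2 cg3 cg4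
  -- (e4)
  have he4 : ∫ u in (0:ℝ)..1, (1-u) * u^k * Ak (b+u*(a-b)) b
      = (∫ u in (0:ℝ)..1, u^k * Ak (b+u*(a-b)) b)
        - ∫ u in (0:ℝ)..1, u^(k+1) * Ak (b+u*(a-b)) b := by
    rw [← intervalIntegral.integral_sub (cg1.intervalIntegrable 0 1)
      (cg2.intervalIntegrable 0 1)]
    apply intervalIntegral.integral_congr
    intro u _
    ring
  -- (s4): first derivative of IH in the first slot
  have hder1 : ∀ s : ℝ, ((k:ℝ)+1) * PD1 (H (k+1)) s b
      + ((0-1) * PD2 (H (k+1)) s b + (b-s) * PD1 (PD2 (H (k+1))) s b)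
      = PD1 (PD2 (PD2 (H k))) s b + u₀ b * PD1 (H k) s b := by
    intro s
    have hfeq : (fun s' => ((k:ℝ)+1) * H (k+1) s' b + (b-s') * PD2 (H (k+1)) s' b)
        = fun s' => PD2 (PD2 (H k)) s' b + u₀ b * H k s' b := funext (fun s' => IH s' b)
    have hL : HasDerivAt (fun s' => ((k:ℝ)+1) * H (k+1) s' b + (b-s') * PD2 (H (k+1)) s' b)
        (((k:ℝ)+1) * PD1 (H (k+1)) s b
          + ((0-1) * PD2 (H (k+1)) s b + (b-s) * PD1 (PD2 (H (k+1))) s b)) s :=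
      ((sm_hasDerivAt_pd1 smH1 s b).const_mul ((k:ℝ)+1)).add
        (((hasDerivAt_const s b).sub (hasDerivAt_id s)).mul
          (sm_hasDerivAt_pd1 (sm_pd2 smH1) s b))
    have hR : HasDerivAt (fun s' => PD2 (PD2 (H k)) s' b + u₀ b * H k s' b)
        (PD1 (PD2 (PD2 (H k))) s b + u₀ b * PD1 (H k) s b) s :=
      (sm_hasDerivAt_pd1 (sm_pd2 (sm_pd2 smHk)) s b).add
        ((sm_hasDerivAt_pd1 smHk s b).const_mul (u₀ b))
    have h := hL.deriv
    rw [hfeq, hR.deriv] at h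
    exact h.symm
  -- second derivative of IH in the first slot
  have hder2 : ∀ s : ℝ, ((k:ℝ)+1) * PD1 (PD1 (H (k+1))) s b
      + ((0-1) * PD1 (PD2 (H (k+1))) s b
        + ((0-1) * PD1 (PD2 (H (k+1))) s b + (b-s) * PD1 (PD1 (PD2 (H (k+1)))) s b))
      = PD1 (PD1 (PD2 (PD2 (H k)))) s b + u₀ b * PD1 (PD1 (H k)) s b := by
    intro s
    have hfeq : (fun s' => ((k:ℝ)+1) * PD1 (H (k+1)) s' b
        + ((0-1) * PD2 (H (k+1)) s' b + (b-s') * PD1 (PD2 (H (k+1))) s' b))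
        = fun s' => PD1 (PD2 (PD2 (H k))) s' b + u₀ b * PD1 (H k) s' b := funext hder1
    have hL : HasDerivAt (fun s' => ((k:ℝ)+1) * PD1 (H (k+1)) s' b
        + ((0-1) * PD2 (H (k+1)) s' b + (b-s') * PD1 (PD2 (H (k+1))) s' b))
        (((k:ℝ)+1) * PD1 (PD1 (H (k+1))) s b
          + ((0-1) * PD1 (PD2 (H (k+1))) s b
            + ((0-1) * PD1 (PD2 (H (k+1))) s b + (b-s) * PD1 (PD1 (PD2 (H (k+1)))) s b))) s :=
      ((sm_hasDerivAt_pd1 (sm_pd1 smH1) s b).const_mul ((k:ℝ)+1)).add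
        (((sm_hasDerivAt_pd1 (sm_pd2 smH1) s b).const_mul (0-1)).add
          (((hasDerivAt_const s b).sub (hasDerivAt_id s)).mul
            (sm_hasDerivAt_pd1 (sm_pd1 (sm_pd2 smH1)) s b)))
    have hR : HasDerivAt (fun s' => PD1 (PD2 (PD2 (H k))) s' b + u₀ b * PD1 (H k) s' b)
        (PD1 (PD1 (PD2 (PD2 (H k)))) s b + u₀ b * PD1 (PD1 (H k)) s b) s :=
      (sm_hasDerivAt_pd1 (sm_pd1 (sm_pd2 (sm_pd2 smHk))) s b).add
        ((sm_hasDerivAt_pd1 (sm_pd1 smHk) s b).const_mul (u₀ b))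
    have h := hL.deriv
    rw [hfeq, hR.deriv] at h
    exact h.symm
  -- expansions of PD2 Ak, PD2 (PD2 Am)
  have hPD2Ak : ∀ s : ℝ, PD2 Ak s b
      = PD1 (PD1 (PD2 (H (k+1)))) s b + u₀ s * PD2 (H (k+1)) s b := by
    intro s
    show deriv (fun t => Ak s t) b = _
    have h1 : (fun t => Ak s t) = fun t => PD1 (PD1 (H (k+1))) s t + u₀ s * H (k+1) s t := rfl
    rw [h1, ((sm_hasDerivAt_pd2 (sm_pd1 (sm_pd1 smH1)) s b).fun_add
      ((sm_hasDerivAt_pd2 smH1 s b).const_mul (u₀ s))).deriv, pd211 smH1]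
  have hPD2Am : PD2 Am = fun s t => PD2 (PD1 (PD1 (H k))) s t + u₀ s * PD2 (H k) s t := by
    funext s t
    show deriv (fun t' => Am s t') t = _
    have h1 : (fun t' => Am s t') = fun t' => PD1 (PD1 (H k)) s t' + u₀ s * H k s t' := rfl
    rw [h1, ((sm_hasDerivAt_pd2 (sm_pd1 (sm_pd1 smHk)) s t).fun_add
      ((sm_hasDerivAt_pd2 smHk s t).const_mul (u₀ s))).deriv]
  have hPD2PD2Am : ∀ s : ℝ, PD2 (PD2 Am) s b
      = PD1 (PD1 (PD2 (PD2 (H k)))) s b + u₀ s * PD2 (PD2 (H k)) s b := by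
    intro s
    show deriv (fun t => PD2 Am s t) b = _
    have h1 : (fun t => PD2 Am s t)
        = fun t => PD2 (PD1 (PD1 (H k))) s t + u₀ s * PD2 (H k) s t := by
      funext t; rw [hPD2Am]
    rw [h1, ((sm_hasDerivAt_pd2 (sm_pd2 (sm_pd1 (sm_pd1 smHk))) s b).fun_add
      ((sm_hasDerivAt_pd2 (sm_pd2 smHk) s b).const_mul (u₀ s))).deriv]
    rw [show PD2 (PD2 (PD1 (PD1 (H k)))) = PD1 (PD1 (PD2 (PD2 (H k)))) from by
      rw [show PD2 (PD1 (PD1 (H k))) = PD1 (PD1 (PD2 (H k))) from pd211 smHk,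
        pd211 (sm_pd2 smHk)]]
  have hAm_app : ∀ s : ℝ, Am s b = PD1 (PD1 (H k)) s b + u₀ s * H k s b := fun s => rfl
  have hAk_app : ∀ s : ℝ, Ak s b = PD1 (PD1 (H (k+1))) s b + u₀ s * H (k+1) s b := fun s => rfl
  -- (C4)
  have hC4 : ∀ s : ℝ, (b-s) * PD2 Ak s b
      = PD2 (PD2 Am) s b + u₀ b * Am s b - ((k:ℝ)+1) * Ak s b
        + 2 * PD1 (PD2 (H (k+1))) s b := by
    intro s
    rw [hPD2Ak s, hPD2PD2Am s, hAm_app s, hAk_app s]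
    linear_combination hder2 s + u₀ s * IH s b
  -- (s5)
  have cg6 : Continuous (fun u : ℝ => u^k * PD2 (PD2 Am) (b + u*(a-b)) b) :=
    (continuous_pow k).mul (cal (PD2 (PD2 Am)) (sm_pd2 (sm_pd2 smAm)).continuous)
  have cg7 : Continuous (fun u : ℝ => u^k * Am (b + u*(a-b)) b) :=
    (continuous_pow k).mul (cal Am smAm.continuous)
  have cg8 : Continuous (fun u : ℝ => u^k * PD1 (PD2 (H (k+1))) (b + u*(a-b)) b) :=
    (continuous_pow k).mul (cal (PD1 (PD2 (H (k+1)))) (sm_pd1 (sm_pd2 smH1)).continuous)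
  have he5 : (b-a) * (∫ u in (0:ℝ)..1, u^(k+1) * PD2 Ak (b+u*(a-b)) b)
      = 1 * (∫ u in (0:ℝ)..1, u^k * PD2 (PD2 Am) (b+u*(a-b)) b)
        + (u₀ b) * (∫ u in (0:ℝ)..1, u^k * Am (b+u*(a-b)) b)
        + (-((k:ℝ)+1)) * (∫ u in (0:ℝ)..1, u^k * Ak (b+u*(a-b)) b)
        + 2 * (∫ u in (0:ℝ)..1, u^k * PD1 (PD2 (H (k+1))) (b+u*(a-b)) b) := by
    calc (b-a) * ∫ u in (0:ℝ)..1, u^(k+1) * PD2 Ak (b+u*(a-b)) b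
        = ∫ u in (0:ℝ)..1, (b-a) * (u^(k+1) * PD2 Ak (b+u*(a-b)) b) := by
          rw [intervalIntegral.integral_const_mul]
    _ = ∫ u in (0:ℝ)..1, (1 * (u^k * PD2 (PD2 Am) (b+u*(a-b)) b)
          + (u₀ b) * (u^k * Am (b+u*(a-b)) b)
          + (-((k:ℝ)+1)) * (u^k * Ak (b+u*(a-b)) b)
          + 2 * (u^k * PD1 (PD2 (H (k+1))) (b+u*(a-b)) b)) := by
        apply intervalIntegral.integral_congr
        intro u _
        have h := hC4 (b+u*(a-b))
        simp only []
        linear_combination (u^k) * h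
    _ = _ := isplit4 1 (u₀ b) (-((k:ℝ)+1)) 2 _ _ _ _ cg6 cg7 cg1 cg8
  -- (s6): second derivative in the second slot
  have hP2H1 : ∀ a' t : ℝ, PD2 (H (k+1)) a' t = ∫ u in (0:ℝ)..1,
      u^k * ((1-u) * PD1 Am (t + u*(a'-t)) t + PD2 Am (t + u*(a'-t)) t) := by
    intro a' t
    have hfun : (fun t' => H (k+1) a' t') =
        fun t' => ∫ u in (0:ℝ)..1, u^k * Am (t' + u*(a'-t')) t' :=
      funext (fun t' => hrec u₀ H hHk k a' t')
    show deriv (fun t' => H (k+1) a' t') t = _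
    rw [hfun, (dui_slant Am smAm k a' t).deriv]
  have hPP1 : PD2 (PD2 (H (k+1))) a b = ∫ u in (0:ℝ)..1,
      u^k * ((1-u)^2 * PD1 (PD1 Am) (b + u*(a-b)) b
        + 2*((1-u) * PD1 (PD2 Am) (b + u*(a-b)) b) + PD2 (PD2 Am) (b + u*(a-b)) b) := by
    show deriv (fun t => PD2 (H (k+1)) a t) b = _
    have hfun : (fun t => PD2 (H (k+1)) a t) = fun t => ∫ u in (0:ℝ)..1,
        u^k * ((1-u) * PD1 Am (t + u*(a-t)) t + PD2 Am (t + u*(a-t)) t) :=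
      funext (fun t => hP2H1 a t)
    rw [hfun]
    have hFc : Continuous (Function.uncurry (fun (u t : ℝ) =>
        u^k * ((1-u) * PD1 Am (t + u*(a-t)) t + PD2 Am (t + u*(a-t)) t))) := by
      have hh : Function.uncurry (fun (u t : ℝ) =>
          u^k * ((1-u) * PD1 Am (t + u*(a-t)) t + PD2 Am (t + u*(a-t)) t))
          = fun w : ℝ × ℝ => w.1^k * ((1-w.1) * Function.uncurry (PD1 Am) ((w.2 + w.1*(a-w.2)), w.2)
            + Function.uncurry (PD2 Am) ((w.2 + w.1*(a-w.2)), w.2)) := by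
        funext w; rfl
      rw [hh]
      exact (continuous_fst.pow k).mul (((continuous_const.sub continuous_fst).mul
        ((sm_pd1 smAm).continuous.comp (by fun_prop))).add
          ((sm_pd2 smAm).continuous.comp (by fun_prop)))
    have hDFc : Continuous (Function.uncurry (fun (u t : ℝ) =>
        u^k * ((1-u) * ((1-u) * PD1 (PD1 Am) (t + u*(a-t)) t + PD2 (PD1 Am) (t + u*(a-t)) t)
          + ((1-u) * PD1 (PD2 Am) (t + u*(a-t)) t + PD2 (PD2 Am) (t + u*(a-t)) t)))) := by
      have hh : Function.uncurry (fun (u t : ℝ) =>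
          u^k * ((1-u) * ((1-u) * PD1 (PD1 Am) (t + u*(a-t)) t + PD2 (PD1 Am) (t + u*(a-t)) t)
            + ((1-u) * PD1 (PD2 Am) (t + u*(a-t)) t + PD2 (PD2 Am) (t + u*(a-t)) t)))
          = fun w : ℝ × ℝ => w.1^k * ((1-w.1) * ((1-w.1) * Function.uncurry (PD1 (PD1 Am)) ((w.2 + w.1*(a-w.2)), w.2)
              + Function.uncurry (PD2 (PD1 Am)) ((w.2 + w.1*(a-w.2)), w.2))
            + ((1-w.1) * Function.uncurry (PD1 (PD2 Am)) ((w.2 + w.1*(a-w.2)), w.2)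
              + Function.uncurry (PD2 (PD2 Am)) ((w.2 + w.1*(a-w.2)), w.2))) := by
        funext w; rfl
      rw [hh]
      exact (continuous_fst.pow k).mul ((((continuous_const.sub continuous_fst).mul
        (((continuous_const.sub continuous_fst).mul
          ((sm_pd1 (sm_pd1 smAm)).continuous.comp (by fun_prop))).add
          ((sm_pd2 (sm_pd1 smAm)).continuous.comp (by fun_prop))))).add
        (((continuous_const.sub continuous_fst).mul
          ((sm_pd1 (sm_pd2 smAm)).continuous.comp (by fun_prop))).add
          ((sm_pd2 (sm_pd2 smAm)).continuous.comp (by fun_prop))))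
    have hpt : ∀ u t : ℝ, HasDerivAt (fun t' => u^k * ((1-u) * PD1 Am (t' + u*(a-t')) t'
        + PD2 Am (t' + u*(a-t')) t'))
        (u^k * ((1-u) * ((1-u) * PD1 (PD1 Am) (t + u*(a-t)) t + PD2 (PD1 Am) (t + u*(a-t)) t)
          + ((1-u) * PD1 (PD2 Am) (t + u*(a-t)) t + PD2 (PD2 Am) (t + u*(a-t)) t))) t := by
      intro u t
      have hg1 : HasDerivAt (fun t : ℝ => t + u*(a-t)) (1-u) t := by
        have := (hasDerivAt_id t).add (((hasDerivAt_const t a).sub (hasDerivAt_id t)).const_mul u)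
        refine this.congr_deriv ?_
        ring
      have h1 := (sm_comp2 (sm_pd1 smAm) hg1 (hasDerivAt_id t)).const_mul (1-u)
      have h2 := sm_comp2 (sm_pd2 smAm) hg1 (hasDerivAt_id t)
      have := (h1.add h2).const_mul (u^k)
      refine this.congr_deriv ?_
      simp only [id_eq]
      ring
    have hD := dui (fun (u t : ℝ) => u^k * ((1-u) * PD1 Am (t + u*(a-t)) t
        + PD2 Am (t + u*(a-t)) t))
      (fun (u t : ℝ) => u^k * ((1-u) * ((1-u) * PD1 (PD1 Am) (t + u*(a-t)) t
          + PD2 (PD1 Am) (t + u*(a-t)) t)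
        + ((1-u) * PD1 (PD2 Am) (t + u*(a-t)) t + PD2 (PD2 Am) (t + u*(a-t)) t)))
      hFc hDFc hpt b
    rw [hD.deriv]
    apply intervalIntegral.integral_congr
    intro u _
    show u^k * ((1-u) * ((1-u) * PD1 (PD1 Am) (b + u*(a-b)) b + PD2 (PD1 Am) (b + u*(a-b)) b)
        + ((1-u) * PD1 (PD2 Am) (b + u*(a-b)) b + PD2 (PD2 Am) (b + u*(a-b)) b)) = _
    rw [show PD2 (PD1 Am) = PD1 (PD2 Am) from (sm_clairaut smAm).symm]
    ring
  -- (s7)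
  have hP1P2 : ∀ s : ℝ, PD1 (PD2 (H (k+1))) s b = ∫ v in (0:ℝ)..1,
      v^k * ((1-v) * (v * PD1 (PD1 Am) (b + v*(s-b)) b) + v * PD1 (PD2 Am) (b + v*(s-b)) b) := by
    intro s
    show deriv (fun s' => PD2 (H (k+1)) s' b) s = _
    have hfun : (fun s' => PD2 (H (k+1)) s' b) = fun s' => ∫ v in (0:ℝ)..1,
        v^k * ((1-v) * PD1 Am (b + v*(s'-b)) b + PD2 Am (b + v*(s'-b)) b) :=
      funext (fun s' => hP2H1 s' b)
    rw [hfun]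
    have hFc : Continuous (Function.uncurry (fun (v s : ℝ) =>
        v^k * ((1-v) * PD1 Am (b + v*(s-b)) b + PD2 Am (b + v*(s-b)) b))) := by
      have hh : Function.uncurry (fun (v s : ℝ) =>
          v^k * ((1-v) * PD1 Am (b + v*(s-b)) b + PD2 Am (b + v*(s-b)) b))
          = fun w : ℝ × ℝ => w.1^k * ((1-w.1) * Function.uncurry (PD1 Am) ((b + w.1*(w.2-b)), b)
            + Function.uncurry (PD2 Am) ((b + w.1*(w.2-b)), b)) := by
        funext w; rfl
      rw [hh]
      exact (continuous_fst.pow k).mul (((continuous_const.sub continuous_fst).mul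
        ((sm_pd1 smAm).continuous.comp (by fun_prop))).add
          ((sm_pd2 smAm).continuous.comp (by fun_prop)))
    have hDFc : Continuous (Function.uncurry (fun (v s : ℝ) =>
        v^k * ((1-v) * (v * PD1 (PD1 Am) (b + v*(s-b)) b) + v * PD1 (PD2 Am) (b + v*(s-b)) b))) := by
      have hh : Function.uncurry (fun (v s : ℝ) =>
          v^k * ((1-v) * (v * PD1 (PD1 Am) (b + v*(s-b)) b) + v * PD1 (PD2 Am) (b + v*(s-b)) b))
          = fun w : ℝ × ℝ => w.1^k * ((1-w.1) * (w.1 * Function.uncurry (PD1 (PD1 Am)) ((b + w.1*(w.2-b)), b))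
            + w.1 * Function.uncurry (PD1 (PD2 Am)) ((b + w.1*(w.2-b)), b)) := by
        funext w; rfl
      rw [hh]
      exact (continuous_fst.pow k).mul (((continuous_const.sub continuous_fst).mul
        (continuous_fst.mul ((sm_pd1 (sm_pd1 smAm)).continuous.comp (by fun_prop)))).add
          (continuous_fst.mul ((sm_pd1 (sm_pd2 smAm)).continuous.comp (by fun_prop))))
    have hpt : ∀ v s : ℝ, HasDerivAt (fun s' => v^k * ((1-v) * PD1 Am (b + v*(s'-b)) b
        + PD2 Am (b + v*(s'-b)) b))
        (v^k * ((1-v) * (v * PD1 (PD1 Am) (b + v*(s-b)) b) + v * PD1 (PD2 Am) (b + v*(s-b)) b)) s := by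
      intro v s
      have hg1 : HasDerivAt (fun s : ℝ => b + v*(s-b)) v s := by
        have := (hasDerivAt_const s b).add (((hasDerivAt_id s).sub (hasDerivAt_const s b)).const_mul v)
        refine this.congr_deriv ?_
        ring
      have h1 := (sm_comp2 (sm_pd1 smAm) hg1 (hasDerivAt_const s b)).const_mul (1-v)
      have h2 := sm_comp2 (sm_pd2 smAm) hg1 (hasDerivAt_const s b)
      have := (h1.add h2).const_mul (v^k)
      refine this.congr_deriv ?_
      ring
    exact (dui _ _ hFc hDFc hpt s).deriv
  -- (s8)
  have cφ : Continuous (fun t : ℝ => PD1 (PD1 Am) (b + t*(a-b)) b) :=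
    cal (PD1 (PD1 Am)) (sm_pd1 (sm_pd1 smAm)).continuous
  have cψ : Continuous (fun t : ℝ => PD1 (PD2 Am) (b + t*(a-b)) b) :=
    cal (PD1 (PD2 Am)) (sm_pd1 (sm_pd2 smAm)).continuous
  have hkey1 := keyE k (k+1) (by omega) _ cφ
  have hkey2 := keyE k (k+2) (by omega) _ cφ
  have hkey3 := keyE k (k+1) (by omega) _ cψ
  rw [show ((k+1:ℕ):ℝ) - (k:ℕ) = 1 by push_cast; ring, inv_one, one_mul] at hkey1 hkey3
  rw [show ((k+2:ℕ):ℝ) - (k:ℕ) = 2 by push_cast; ring] at hkey2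
  -- double integral expansion of ∫ g8
  have harg : ∀ u v : ℝ, b + v*((b + u*(a-b)) - b) = b + (u*v)*(a-b) := by
    intro u v; ring
  have hmapIn : ∀ u : ℝ, Continuous (fun v : ℝ => ((b + (u*v)*(a-b)), b)) := by
    intro u; fun_prop
  have hmapOut : Continuous (fun w : ℝ × ℝ => ((b + (w.1*w.2)*(a-b)), b)) := by fun_prop
  have cIn1 : ∀ u : ℝ, Continuous (fun v : ℝ => v^(k+1) * PD1 (PD1 Am) (b + (u*v)*(a-b)) b) := by
    intro u
    exact (continuous_pow (k+1)).mul ((sm_pd1 (sm_pd1 smAm)).continuous.comp (hmapIn u))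
  have cIn2 : ∀ u : ℝ, Continuous (fun v : ℝ => v^(k+2) * PD1 (PD1 Am) (b + (u*v)*(a-b)) b) := by
    intro u
    exact (continuous_pow (k+2)).mul ((sm_pd1 (sm_pd1 smAm)).continuous.comp (hmapIn u))
  have cIn3 : ∀ u : ℝ, Continuous (fun v : ℝ => v^(k+1) * PD1 (PD2 Am) (b + (u*v)*(a-b)) b) := by
    intro u
    exact (continuous_pow (k+1)).mul ((sm_pd1 (sm_pd2 smAm)).continuous.comp (hmapIn u))
  have cOut1 : Continuous (fun u : ℝ => u^k *
      (∫ v in (0:ℝ)..1, v^(k+1) * PD1 (PD1 Am) (b + (u*v)*(a-b)) b)) := by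
    apply (continuous_pow k).mul
    apply continuous_parametric_intervalIntegral_of_continuous'
      (f := fun (u v : ℝ) => v^(k+1) * PD1 (PD1 Am) (b + (u*v)*(a-b)) b)
    exact (continuous_snd.pow (k+1)).mul
      ((sm_pd1 (sm_pd1 smAm)).continuous.comp hmapOut)
  have cOut2 : Continuous (fun u : ℝ => u^k *
      (∫ v in (0:ℝ)..1, v^(k+2) * PD1 (PD1 Am) (b + (u*v)*(a-b)) b)) := by
    apply (continuous_pow k).mul
    apply continuous_parametric_intervalIntegral_of_continuous'
      (f := fun (u v : ℝ) => v^(k+2) * PD1 (PD1 Am) (b + (u*v)*(a-b)) b)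
    exact (continuous_snd.pow (k+2)).mul
      ((sm_pd1 (sm_pd1 smAm)).continuous.comp hmapOut)
  have cOut3 : Continuous (fun u : ℝ => u^k *
      (∫ v in (0:ℝ)..1, v^(k+1) * PD1 (PD2 Am) (b + (u*v)*(a-b)) b)) := by
    apply (continuous_pow k).mul
    apply continuous_parametric_intervalIntegral_of_continuous'
      (f := fun (u v : ℝ) => v^(k+1) * PD1 (PD2 Am) (b + (u*v)*(a-b)) b)
    exact (continuous_snd.pow (k+1)).mul
      ((sm_pd1 (sm_pd2 smAm)).continuous.comp hmapOut)
  have hg8eq : ∫ u in (0:ℝ)..1, u^k * PD1 (PD2 (H (k+1))) (b+u*(a-b)) b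
      = ((∫ u in (0:ℝ)..1, u^k * (∫ v in (0:ℝ)..1, v^(k+1) * PD1 (PD1 Am) (b + (u*v)*(a-b)) b))
          - (∫ u in (0:ℝ)..1, u^k * (∫ v in (0:ℝ)..1, v^(k+2) * PD1 (PD1 Am) (b + (u*v)*(a-b)) b)))
        + ∫ u in (0:ℝ)..1, u^k * (∫ v in (0:ℝ)..1, v^(k+1) * PD1 (PD2 Am) (b + (u*v)*(a-b)) b) := by
    rw [← intervalIntegral.integral_sub (cOut1.intervalIntegrable 0 1) (cOut2.intervalIntegrable 0 1),
      ← intervalIntegral.integral_add ((cOut1.fun_sub cOut2).intervalIntegrable 0 1)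
        (cOut3.intervalIntegrable 0 1)]
    apply intervalIntegral.integral_congr
    intro u _
    show u^k * PD1 (PD2 (H (k+1))) (b+u*(a-b)) b = _
    rw [hP1P2 (b+u*(a-b))]
    have hinner : ∫ v in (0:ℝ)..1, v^k * ((1-v) * (v * PD1 (PD1 Am) (b + v*((b+u*(a-b))-b)) b)
        + v * PD1 (PD2 Am) (b + v*((b+u*(a-b))-b)) b)
        = ((∫ v in (0:ℝ)..1, v^(k+1) * PD1 (PD1 Am) (b + (u*v)*(a-b)) b)
            - ∫ v in (0:ℝ)..1, v^(k+2) * PD1 (PD1 Am) (b + (u*v)*(a-b)) b)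
          + ∫ v in (0:ℝ)..1, v^(k+1) * PD1 (PD2 Am) (b + (u*v)*(a-b)) b := by
      rw [← intervalIntegral.integral_sub ((cIn1 u).intervalIntegrable 0 1)
          ((cIn2 u).intervalIntegrable 0 1),
        ← intervalIntegral.integral_add (((cIn1 u).fun_sub (cIn2 u)).intervalIntegrable 0 1)
          ((cIn3 u).intervalIntegrable 0 1)]
      apply intervalIntegral.integral_congr
      intro v _
      simp only []
      rw [harg u v]
      ring
    rw [hinner]
    ring
  -- rewrite hPP1 into atoms
  have cE1 : Continuous (fun u : ℝ => (u^k - u^(k+1)) * PD1 (PD1 Am) (b + u*(a-b)) b) :=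
    ((continuous_pow k).sub (continuous_pow (k+1))).mul cφ
  have cE2 : Continuous (fun u : ℝ => (u^k - u^(k+2)) * PD1 (PD1 Am) (b + u*(a-b)) b) :=
    ((continuous_pow k).sub (continuous_pow (k+2))).mul cφ
  have cE3 : Continuous (fun u : ℝ => (u^k - u^(k+1)) * PD1 (PD2 Am) (b + u*(a-b)) b) :=
    ((continuous_pow k).sub (continuous_pow (k+1))).mul cψ
  have hPP1' : PD2 (PD2 (H (k+1))) a b
      = 2 * (∫ u in (0:ℝ)..1, (u^k - u^(k+1)) * PD1 (PD1 Am) (b + u*(a-b)) b)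
        + (-1) * (∫ u in (0:ℝ)..1, (u^k - u^(k+2)) * PD1 (PD1 Am) (b + u*(a-b)) b)
        + 2 * (∫ u in (0:ℝ)..1, (u^k - u^(k+1)) * PD1 (PD2 Am) (b + u*(a-b)) b)
        + 1 * (∫ u in (0:ℝ)..1, u^k * PD2 (PD2 Am) (b + u*(a-b)) b) := by
    have step1 : (∫ u in (0:ℝ)..1, u^k * ((1-u)^2 * PD1 (PD1 Am) (b + u*(a-b)) b
          + 2*((1-u) * PD1 (PD2 Am) (b + u*(a-b)) b) + PD2 (PD2 Am) (b + u*(a-b)) b))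
        = ∫ u in (0:ℝ)..1, (2 * ((u^k - u^(k+1)) * PD1 (PD1 Am) (b + u*(a-b)) b)
          + (-1) * ((u^k - u^(k+2)) * PD1 (PD1 Am) (b + u*(a-b)) b)
          + 2 * ((u^k - u^(k+1)) * PD1 (PD2 Am) (b + u*(a-b)) b)
          + 1 * (u^k * PD2 (PD2 Am) (b + u*(a-b)) b)) := by
      apply intervalIntegral.integral_congr
      intro u _
      simp only []
      ring
    rw [hPP1, step1]
    exact isplit4 2 (-1) 2 1 _ _ _ _ cE1 cE2 cE3 cg6
  have hg8' : ∫ u in (0:ℝ)..1, u^k * PD1 (PD2 (H (k+1))) (b+u*(a-b)) b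
      = (∫ u in (0:ℝ)..1, (u^k - u^(k+1)) * PD1 (PD1 Am) (b + u*(a-b)) b)
        - 2⁻¹ * (∫ u in (0:ℝ)..1, (u^k - u^(k+2)) * PD1 (PD1 Am) (b + u*(a-b)) b)
        + ∫ u in (0:ℝ)..1, (u^k - u^(k+1)) * PD1 (PD2 Am) (b + u*(a-b)) b := by
    rw [hg8eq, hkey1, hkey2, hkey3]
  have he7 : H (k+1) a b = ∫ u in (0:ℝ)..1, u^k * Am (b + u*(a-b)) b :=
    hrec u₀ H hHk k a b
  rw [he1, hs1, hPP1', he7]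
  linear_combination he3 + ((k:ℝ)+1) * he4 + he5 + 2 * hg8'


include hu₀ hH0 hHk in
lemma T2 : ∀ (k : ℕ) (a b : ℝ),
    ((k:ℝ)+1) * H (k+1) a b + (b-a) * PD2 (H (k+1)) a b
      = PD2 (PD2 (H k)) a b + u₀ b * H k a b := by
  intro k
  induction k with
  | zero =>
    intro a b
    have := T2base u₀ hu₀ H hH0 hHk a b
    norm_num at this ⊢
    exact this
  | succ k IH =>
    intro a b
    have h := T2step u₀ hu₀ H hH0 hHk k IH a b
    have hcast : ((k+1:ℕ):ℝ) + 1 = (k:ℝ) + 2 := by push_cast; ring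
    rw [hcast]
    exact h

include hu₀ hH0 hHk in
lemma symmF : ∀ (k : ℕ) (x y : ℝ), H k x y = H k y x := by
  intro k
  induction k with
  | zero =>
    intro x y
    rw [hH0, hH0]
  | succ k IH =>
    intro x y
    have smHk := hsm u₀ hu₀ H hH0 hHk k
    have smH1 := hsm u₀ hu₀ H hH0 hHk (k+1)
    -- the swapped function satisfies the same transport ODE
    have hODE : ∀ t : ℝ, ((k:ℝ)+1) * H (k+1) y t + (t-y) * PD2 (H (k+1)) y t
        = AAop u₀ (H k) t y := by
      intro t
      have h := T2 u₀ hu₀ H hH0 hHk k y t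
      have hswap : (fun t' : ℝ => H k y t') = fun t' => H k t' y := funext (fun t' => IH y t')
      have hswap2 : PD2 (PD2 (H k)) y t = PD1 (PD1 (H k)) t y := by
        have e1 : (fun t' => PD2 (H k) y t') = fun t' => PD1 (H k) t' y := by
          funext t'
          show deriv (fun s => H k y s) t' = deriv (fun s => H k s y) t'
          rw [hswap]
        show deriv (fun t' => PD2 (H k) y t') t = _
        rw [e1]
        rfl
      rw [show AAop u₀ (H k) t y = PD1 (PD1 (H k)) t y + u₀ t * H k t y from rfl,
        ← hswap2, ← IH y t]
      exact h
    have hkey : ∀ u : ℝ, HasDerivAt (fun u => u^(k+1) * H (k+1) y (y + u*(x-y)))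
        (u^k * AAop u₀ (H k) (y + u*(x-y)) y) u := by
      intro u
      have hz : HasDerivAt (fun u : ℝ => y + u*(x-y)) (x-y) u := by
        simpa using (hasDerivAt_const u y).fun_add ((hasDerivAt_id u).mul_const (x-y))
      have hψ : HasDerivAt (fun u : ℝ => H (k+1) y (y + u*(x-y)))
          ((x-y) * PD2 (H (k+1)) y (y + u*(x-y))) u := by
        have := sm_comp2 smH1 (hasDerivAt_const u y) hz
        refine this.congr_deriv ?_
        ring
      have hpow : HasDerivAt (fun u : ℝ => u^(k+1)) (((k:ℝ)+1) * u^k) u := by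
        have := hasDerivAt_pow (k+1) u
        refine this.congr_deriv ?_
        push_cast
        ring
      have hmul := hpow.mul hψ
      refine hmul.congr_deriv (Eq.symm ?_)
      have h := hODE (y + u*(x-y))
      linear_combination (-(u^k)) * h
    have hcont : Continuous (fun u : ℝ => u^k * AAop u₀ (H k) (y + u*(x-y)) y) := by
      have hmap : Continuous (fun u : ℝ => ((y + u*(x-y)), y)) := by fun_prop
      exact (continuous_pow k).mul ((smAA u₀ hu₀ (H k) smHk).continuous.comp hmap)
    have hint := ftc01 hkey hcont
    rw [hrec u₀ H hHk k x y, hint]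
    rw [show y + 1*(x-y) = x by ring]
    simp [zero_pow]

end Main

/-- For smooth `u₀`, the Hadamard's coefficients of the Schrödinger operator
`L = ∂_x² + u₀`, defined recursively by `H₀ = 1` and
`H_{k+1}(x,y) = ∫_0^1 u^k (∂_x² H_k + u₀ H_k)(y + u(x-y), y) du` (the unique smooth
solution of `(k+1) H_{k+1} + (x-y) ∂_x H_{k+1} = ∂_x² H_k + u₀ H_k`), are symmetric:
`H_k(x,y) = H_k(y,x)`. -/
theorem stmt_11 (u₀ : ℝ → ℝ) (hu₀ : ContDiff ℝ (⊤ : ℕ∞) u₀)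
    (H : ℕ → ℝ → ℝ → ℝ)
    (hH0 : ∀ x y : ℝ, H 0 x y = 1)
    (hHk : ∀ (k : ℕ) (x y : ℝ), H (k + 1) x y = ∫ u in (0:ℝ)..1, u ^ k *
      (iteratedDeriv 2 (fun x' => H k x' y) (y + u * (x - y)) +
        u₀ (y + u * (x - y)) * H k (y + u * (x - y)) y)) :
    ∀ (k : ℕ) (x y : ℝ), H k x y = H k y x := by
  exact symmF u₀ hu₀ H hH0 hHk
end

section
/- Fix y ∈ ℝ and let f : ℝ → ℝ be infinitely differentiable. Define a sequence of functions g_m on ℝ ∖ {y} by g₀ = f and g_{m+1}(x) = g_m'(x)/(x − y). Then for every integer k ≥ 1 and every x ≠ y, g_k(x) = (−1)^k · Σ_{ℓ=0}^{k−1} (−1)^{ℓ+1} · (k−ℓ)_{k−1} / (2^{k−ℓ−1} · ℓ!) · f^{(ℓ+1)}(x) / (x − y)^{2k−ℓ−1}, where (a)_m = a(a+1)⋯(a+m−1) denotes the ascending Pochhammer symbol. -/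
open Polynomial Finset

private noncomputable def Cc (k ℓ : ℕ) : ℝ :=
  (-1:ℝ)^k * ((-1:ℝ) ^ (ℓ + 1) * (ascPochhammer ℝ (k - 1)).eval ((k : ℝ) - (ℓ : ℝ)) /
      (2 ^ (k - ℓ - 1) * (Nat.factorial ℓ : ℝ)))

private lemma poch_succ (n : ℕ) (a : ℝ) :
    (ascPochhammer ℝ (n+1)).eval a = (ascPochhammer ℝ n).eval a * (a + n) := by
  rw [ascPochhammer_succ_right]; simp

private lemma poch_shift (n : ℕ) (a : ℝ) :
    a * (ascPochhammer ℝ n).eval (a+1) = (ascPochhammer ℝ n).eval a * (a + n) := by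
  have h1 : (ascPochhammer ℝ (n+1)).eval a = a * (ascPochhammer ℝ n).eval (a+1) := by
    rw [ascPochhammer_succ_left]; simp [eval_comp]
  have h2 := poch_succ n a
  rw [← h1, h2]

private lemma Cc_top (m : ℕ) :
    Cc (m+1) (m+1) * (-(2*((m:ℝ)+1) - ((m:ℝ)+1) - 1)) = 0 := by
  rcases Nat.eq_zero_or_pos m with rfl | hm
  · norm_num
  · have : Cc (m+1) (m+1) = 0 := by
      simp only [Cc, Nat.add_sub_cancel, sub_self, ascPochhammer_eval_zero]
      simp [Nat.pos_iff_ne_zero.mp hm]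
    simp [this]

private lemma Cc_rec0 (m : ℕ) : Cc (m+2) 0 = Cc (m+1) 0 * (-(2*(m:ℝ)+1)) := by
  have key : (ascPochhammer ℝ (m+1)).eval ((m:ℝ)+2)
      = 2*(2*(m:ℝ)+1) * (ascPochhammer ℝ m).eval ((m:ℝ)+1) := by
    have h1 := poch_shift m ((m:ℝ)+1)
    have h2 := poch_succ m ((m:ℝ)+2)
    rw [show ((m:ℝ)+1+1) = (m:ℝ)+2 by ring] at h1
    linear_combination h2 + 2*h1
  simp only [Cc]
  simp only [Nat.add_sub_cancel, Nat.sub_zero, Nat.factorial_zero, show m+2-1 = m+1 from rfl,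
    show m+1-1 = m from rfl, show m+2-0-1 = m+1 from by omega, show m+1-0-1 = m from by omega]
  push_cast
  rw [show ((m:ℝ)+2-0) = (m:ℝ)+2 by ring, show ((m:ℝ)+1-0) = (m:ℝ)+1 by ring, key]
  have hp : (2:ℝ)^m ≠ 0 := by positivity
  field_simp
  ring

private lemma Cc_rec (m j : ℕ) (hj : j ≤ m) :
    Cc (m+2) (j+1) = Cc (m+1) j + Cc (m+1) (j+1) * (-(2*((m:ℝ)+1) - ((j:ℝ)+1) - 1)) := by
  rcases eq_or_lt_of_le hj with rfl | hlt
  · rw [Cc_top j, add_zero]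
    simp only [Cc, Nat.add_sub_cancel]
    push_cast
    rw [show ((j:ℝ)+2) - ((j:ℝ)+1) = 1 by ring,
      show ((j:ℝ)+1) - (j:ℝ) = 1 by ring,
      show j+1-j-1 = 0 from by omega,
      ascPochhammer_eval_one, ascPochhammer_eval_one, Nat.factorial_succ]
    push_cast [Nat.factorial_ne_zero]
    have : ((j:ℝ)+1) ≠ 0 := by positivity
    have h2 : (Nat.factorial j : ℝ) ≠ 0 := Nat.cast_ne_zero.2 (Nat.factorial_ne_zero j)
    field_simp
    ring
  · obtain ⟨n, rfl⟩ : ∃ n, m = n + 1 := ⟨m-1, by omega⟩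
    have hjn : j ≤ n := by omega
    set a : ℝ := (n:ℝ) + 1 - (j:ℝ) with ha
    have key : (ascPochhammer ℝ (n+2)).eval (a+1)
        = ((j:ℝ)+1) * (ascPochhammer ℝ (n+1)).eval (a+1)
          + 2*(2*(n:ℝ)+2-(j:ℝ)) * (ascPochhammer ℝ (n+1)).eval a := by
      have h1 := poch_succ (n+1) (a+1)
      have h2 : (ascPochhammer ℝ (n+1)).eval a = a * (ascPochhammer ℝ n).eval (a+1) := by
        rw [ascPochhammer_succ_left]; simp [eval_comp]
      have h3 := poch_succ n (a+1)
      push_cast at h1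
      linear_combination h1 + (a+(n:ℝ)+1-(j:ℝ)) * h3 - 2*(2*(n:ℝ)+2-(j:ℝ)) * h2
        - (ascPochhammer ℝ n).eval (a+1) * (a - ((n:ℝ)+1)) * ha
    simp only [Cc]
    push_cast
    rw [show n+2-j-1 = (n-j)+1 from by omega,
      show n+1-j-1 = n-j from by omega,
      show ((n:ℝ)+1+2) - ((j:ℝ)+1) = a + 1 from by rw [ha]; ring,
      show ((n:ℝ)+1+1) - (j:ℝ) = a + 1 from by rw [ha]; ring,
      show ((n:ℝ)+1+1) - ((j:ℝ)+1) = a from by rw [ha]; ring, key]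
    rw [pow_succ, Nat.factorial_succ]
    push_cast
    have h1 : ((j:ℝ)+1) ≠ 0 := by positivity
    have h2 : (Nat.factorial j : ℝ) ≠ 0 := Nat.cast_ne_zero.2 (Nat.factorial_ne_zero j)
    have h3 : (2:ℝ)^(n-j) ≠ 0 := by positivity
    field_simp
    ring

private lemma key_formula (y : ℝ) (f : ℝ → ℝ) (hf : ContDiff ℝ (⊤ : ℕ∞) f)
    (g : ℕ → ℝ → ℝ) (hg0 : g 0 = f)
    (hgs : ∀ (m : ℕ) (x : ℝ), g (m + 1) x = deriv (g m) x / (x - y)) :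
    ∀ k : ℕ, 1 ≤ k → ∀ x : ℝ, x ≠ y →
      g k x = ∑ ℓ ∈ Finset.range k,
        Cc k ℓ * iteratedDeriv (ℓ+1) f x * (x - y) ^ ((ℓ:ℤ) + 1 - 2*(k:ℤ)) := by
  have hDa : ∀ (n : ℕ) (z : ℝ), HasDerivAt (iteratedDeriv n f) (iteratedDeriv (n+1) f z) z := by
    intro n z
    rw [iteratedDeriv_succ]
    exact ((hf.differentiable_iteratedDeriv n
      (by exact_mod_cast lt_top_iff_ne_top.2 (by simp))) z).hasDerivAt
  intro k hk
  induction k, hk using Nat.le_induction with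
  | base =>
    intro x hx
    have hne : x - y ≠ 0 := sub_ne_zero.2 hx
    rw [hgs 0, hg0]
    simp only [Finset.sum_range_one]
    have hC : Cc 1 0 = 1 := by simp [Cc]
    rw [hC, iteratedDeriv_one]
    norm_num [zpow_neg, div_eq_mul_inv]
  | succ k hk IH =>
    obtain ⟨m, rfl⟩ : ∃ m, k = m + 1 := ⟨k-1, by omega⟩
    intro x hx
    have hne : x - y ≠ 0 := sub_ne_zero.2 hx
    set E : ℕ → ℤ := fun ℓ => (ℓ:ℤ) - 2*(m:ℤ) - 1 with hEdef
    have hEeq : ∀ ℓ : ℕ, (ℓ:ℤ) + 1 - 2*(((m+1:ℕ)):ℤ) = E ℓ := by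
      intro ℓ; simp only [hEdef]; push_cast; ring
    have hF : HasDerivAt
        (fun z => ∑ ℓ ∈ Finset.range (m+1),
          Cc (m+1) ℓ * iteratedDeriv (ℓ+1) f z * (z - y) ^ (E ℓ))
        (∑ ℓ ∈ Finset.range (m+1),
          (Cc (m+1) ℓ * iteratedDeriv (ℓ+2) f x * (x - y) ^ (E ℓ)
            + Cc (m+1) ℓ * ((E ℓ : ℝ) * iteratedDeriv (ℓ+1) f x * (x - y) ^ (E ℓ - 1)))) x := by
      apply HasDerivAt.fun_sum
      intro ℓ _
      have hB : HasDerivAt (fun z : ℝ => (z - y)^(E ℓ)) ((E ℓ : ℝ) * (x-y)^(E ℓ - 1)) x := by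
        have h := hasDerivAt_zpow (E ℓ) (x-y) (Or.inl hne)
        convert h.comp x ((hasDerivAt_id x).sub_const y) using 1
        · rfl
        · rfl
        · rfl
        · simp
      have hA := (hDa (ℓ+1) x).const_mul (Cc (m+1) ℓ)
      have := hA.mul hB
      convert this using 1
      · rfl
      · rfl
      · ring
    have hIH : g (m+1) =ᶠ[nhds x] (fun z => ∑ ℓ ∈ Finset.range (m+1),
        Cc (m+1) ℓ * iteratedDeriv (ℓ+1) f z * (z - y) ^ (E ℓ)) := by
      filter_upwards [IsOpen.mem_nhds isOpen_compl_singleton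
        (by simpa using hx : x ∈ ({y}ᶜ : Set ℝ))] with z hz
      rw [IH z hz]
      exact Finset.sum_congr rfl fun ℓ _ => by rw [hEeq]
    have hder : deriv (g (m+1)) x = ∑ ℓ ∈ Finset.range (m+1),
        (Cc (m+1) ℓ * iteratedDeriv (ℓ+2) f x * (x - y) ^ (E ℓ)
          + Cc (m+1) ℓ * ((E ℓ : ℝ) * iteratedDeriv (ℓ+1) f x * (x - y) ^ (E ℓ - 1))) := by
      rw [hIH.deriv_eq, hF.deriv]
    rw [hgs (m+1) x, hder]
    -- now pure algebra
    have hterm : ∀ ℓ ∈ Finset.range (m+1),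
        (Cc (m+1) ℓ * iteratedDeriv (ℓ+2) f x * (x - y) ^ (E ℓ)
          + Cc (m+1) ℓ * ((E ℓ : ℝ) * iteratedDeriv (ℓ+1) f x * (x - y) ^ (E ℓ - 1))) / (x - y)
        = Cc (m+1) ℓ * (iteratedDeriv (ℓ+2) f x * (x - y) ^ (E ℓ - 1))
          + (Cc (m+1) ℓ * (E ℓ : ℝ)) * (iteratedDeriv (ℓ+1) f x * (x - y) ^ (E ℓ - 2)) := by
      intro ℓ _
      have h1 : (x-y)^(E ℓ - 1) = (x-y)^(E ℓ) * (x-y)⁻¹ := zpow_sub_one₀ hne _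
      have h2 : (x-y)^(E ℓ - 2) = ((x-y)^(E ℓ) * (x-y)⁻¹) * (x-y)⁻¹ := by
        rw [show E ℓ - 2 = E ℓ - 1 - 1 by ring, zpow_sub_one₀ hne, h1]
      rw [h2, h1, div_eq_mul_inv]
      ring
    rw [Finset.sum_div, Finset.sum_congr rfl hterm, Finset.sum_add_distrib]
    have hzero : (Cc (m+1) (m+1) * (E (m+1) : ℝ)) *
        (iteratedDeriv (m+1+1) f x * (x - y) ^ (E (m+1) - 2)) = 0 := by
      have hc : ((E (m+1) : ℤ) : ℝ) = -(2*((m:ℝ)+1) - ((m:ℝ)+1) - 1) := by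
        simp only [hEdef]; push_cast; ring
      rw [hc, Cc_top m, zero_mul]
    have hS2 : (∑ ℓ ∈ Finset.range (m+1),
          (Cc (m+1) ℓ * (E ℓ : ℝ)) * (iteratedDeriv (ℓ+1) f x * (x - y) ^ (E ℓ - 2)))
        = (∑ i ∈ Finset.range (m+1),
            (Cc (m+1) (i+1) * (E (i+1) : ℝ)) * (iteratedDeriv (i+2) f x * (x - y) ^ (E (i+1) - 2)))
          + (Cc (m+1) 0 * (E 0 : ℝ)) * (iteratedDeriv 1 f x * (x - y) ^ (E 0 - 2)) := by
      rw [Finset.sum_range_succ', Finset.sum_range_succ]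
      rw [hzero, add_zero]
    rw [hS2, ← add_assoc, ← Finset.sum_add_distrib]
    -- rewrite the target
    rw [show (Finset.range (m+1+1)).sum
        (fun ℓ => Cc (m+1+1) ℓ * iteratedDeriv (ℓ+1) f x * (x - y) ^ ((ℓ:ℤ) + 1 - 2*((m+1+1:ℕ):ℤ)))
      = (∑ i ∈ Finset.range (m+1),
          Cc (m+1+1) (i+1) * iteratedDeriv (i+2) f x * (x - y) ^ (((i+1:ℕ):ℤ) + 1 - 2*((m+1+1:ℕ):ℤ)))
        + Cc (m+1+1) 0 * iteratedDeriv 1 f x * (x - y) ^ (((0:ℕ):ℤ) + 1 - 2*((m+1+1:ℕ):ℤ))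
      from Finset.sum_range_succ' _ (m+1)]
    congr 1
    · refine Finset.sum_congr rfl fun i hi => ?_
      have him : i ≤ m := by have := Finset.mem_range.mp hi; omega
      have hexp : ((i+1:ℕ):ℤ) + 1 - 2*(((m+1+1:ℕ)):ℤ) = E i - 1 := by
        simp only [hEdef]; push_cast; ring
      have hEE : E (i+1) - 2 = E i - 1 := by simp only [hEdef]; push_cast; ring
      rw [hexp, hEE]
      have hc : ((E (i+1) : ℤ) : ℝ) = -(2*((m:ℝ)+1) - ((i:ℝ)+1) - 1) := by
        simp only [hEdef]; push_cast; ring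
      rw [hc, Cc_rec m i him]
      ring
    · have hexp : ((0:ℕ):ℤ) + 1 - 2*(((m+1+1:ℕ)):ℤ) = E 0 - 2 := by
        simp only [hEdef]; push_cast; ring
      rw [hexp]
      have hc : ((E 0 : ℤ) : ℝ) = -(2*(m:ℝ)+1) := by
        simp only [hEdef]; push_cast; ring
      rw [hc, Cc_rec0 m]
      ring

/-- Fix `y ∈ ℝ` and a smooth `f : ℝ → ℝ`. Define `g₀ = f` and
`g_{m+1}(x) = g_m'(x)/(x - y)`. Then for `k ≥ 1` and `x ≠ y`,
`g_k(x) = (-1)^k Σ_{ℓ=0}^{k-1} (-1)^{ℓ+1} (k-ℓ)_{k-1} / (2^{k-ℓ-1} ℓ!) ·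
f^{(ℓ+1)}(x)/(x-y)^{2k-ℓ-1}`, where `(a)_m` is the ascending Pochhammer symbol. -/
theorem stmt_12 (y : ℝ) (f : ℝ → ℝ) (hf : ContDiff ℝ (⊤ : ℕ∞) f)
    (g : ℕ → ℝ → ℝ) (hg0 : g 0 = f)
    (hgs : ∀ (m : ℕ) (x : ℝ), g (m + 1) x = deriv (g m) x / (x - y)) :
    ∀ k : ℕ, 1 ≤ k → ∀ x : ℝ, x ≠ y →
      g k x = (-1 : ℝ) ^ k * ∑ ℓ ∈ Finset.range k,
        (-1 : ℝ) ^ (ℓ + 1) * (ascPochhammer ℝ (k - 1)).eval ((k : ℝ) - (ℓ : ℝ)) /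
            (2 ^ (k - ℓ - 1) * (Nat.factorial ℓ : ℝ)) *
          (iteratedDeriv (ℓ + 1) f x / (x - y) ^ (2 * k - ℓ - 1)) := by
  intro k hk x hx
  rw [key_formula y f hf g hg0 hgs k hk x hx, Finset.mul_sum]
  refine Finset.sum_congr rfl fun ℓ hℓ => ?_
  have hℓk : ℓ < k := Finset.mem_range.mp hℓ
  have hne : x - y ≠ 0 := sub_ne_zero.2 hx
  have hx1 : (x - y) ^ ((ℓ:ℤ) + 1 - 2*(k:ℤ)) = ((x - y) ^ (2*k - ℓ - 1 : ℕ))⁻¹ := by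
    rw [show (ℓ:ℤ) + 1 - 2*(k:ℤ) = -((2*k - ℓ - 1 : ℕ):ℤ) from by omega, zpow_neg, zpow_natCast]
  rw [hx1, Cc]
  ring
end

section
/- For all integers n, k with 1 ≤ n ≤ k, the identity Σ_{ℓ=n−1}^{k−1} 2^{ℓ+1} · (−1)^{ℓ−n+1} · ((k−ℓ)_{k−n+ℓ} / ℓ!) · C(ℓ, n−1) = (−1)^{k−n} · 2^n · (n)_{2k−2n} / (k−n)! holds, where (a)_m = a(a+1)⋯(a+m−1) denotes the ascending Pochhammer symbol and C(ℓ, n−1) is the binomial coefficient. -/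
open Finset

lemma key_sum (d : ℕ) :
    ∑ j ∈ Finset.range (d + 1),
      (-1 : ℝ) ^ j * 2 ^ j / (Nat.factorial (d - j) * Nat.factorial j) =
      (-1 : ℝ) ^ d / Nat.factorial d := by
  have h := add_pow (-2 : ℝ) 1 d
  have h1 : ((-2 : ℝ) + 1) ^ d = (-1 : ℝ) ^ d := by norm_num
  rw [h1] at h
  rw [h, Finset.sum_div]
  refine Finset.sum_congr rfl fun j hj => ?_
  have hjd : j ≤ d := by simpa using Nat.lt_succ_iff.mp (Finset.mem_range.mp hj)
  rw [Nat.cast_choose ℝ hjd]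
  have hne : ∀ a : ℕ, (Nat.factorial a : ℝ) ≠ 0 := fun a => by
    exact_mod_cast a.factorial_ne_zero
  have h2 : (-2 : ℝ) ^ j = (-1 : ℝ) ^ j * 2 ^ j := by
    rw [show (-2 : ℝ) = (-1) * 2 by norm_num, mul_pow]
  rw [h2]
  field_simp
  ring

/-- For integers `1 ≤ n ≤ k`,
`Σ_{ℓ=n-1}^{k-1} 2^{ℓ+1} (-1)^{ℓ-n+1} ((k-ℓ)_{k-n+ℓ}/ℓ!) C(ℓ, n-1)
  = (-1)^{k-n} 2^n (n)_{2k-2n} / (k-n)!`,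
where `(a)_m` is the ascending Pochhammer symbol. -/
theorem stmt_13 (n k : ℕ) (hn : 1 ≤ n) (hnk : n ≤ k) :
    ∑ ℓ ∈ Finset.Icc (n - 1) (k - 1),
      (2 : ℝ) ^ (ℓ + 1) * (-1 : ℝ) ^ (ℓ + 1 - n) *
          ((ascPochhammer ℝ (k - n + ℓ)).eval ((k : ℝ) - (ℓ : ℝ)) / (Nat.factorial ℓ : ℝ)) *
        (ℓ.choose (n - 1) : ℝ) =
      (-1 : ℝ) ^ (k - n) * 2 ^ n * (ascPochhammer ℝ (2 * k - 2 * n)).eval (n : ℝ) /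
        (Nat.factorial (k - n) : ℝ) := by
  obtain ⟨m, rfl⟩ : ∃ m, n = m + 1 := ⟨n - 1, by omega⟩
  obtain ⟨d, rfl⟩ : ∃ d, k = m + 1 + d := ⟨k - (m + 1), by omega⟩
  have hne : ∀ a : ℕ, (Nat.factorial a : ℝ) ≠ 0 := fun a => by
    exact_mod_cast a.factorial_ne_zero
  have hIcc : Finset.Icc (m + 1 - 1) (m + 1 + d - 1) = Finset.Ico m (m + d + 1) := by
    rw [← Finset.Ico_add_one_right_eq_Icc]; congr 1 <;> omega
  rw [hIcc, Finset.sum_Ico_eq_sum_range]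
  have hrange : m + d + 1 - m = d + 1 := by omega
  rw [hrange]
  have hstep : ∀ j ∈ Finset.range (d + 1),
      (2 : ℝ) ^ (m + j + 1) * (-1 : ℝ) ^ (m + j + 1 - (m + 1)) *
          ((ascPochhammer ℝ (m + 1 + d - (m + 1) + (m + j))).eval
              ((↑(m + 1 + d) : ℝ) - (↑(m + j) : ℝ)) / (Nat.factorial (m + j) : ℝ)) *
        ((m + j).choose (m + 1 - 1) : ℝ) =
      ((2 : ℝ) ^ (m + 1) * (Nat.factorial (2 * d + m) : ℝ) / (Nat.factorial m : ℝ)) *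
        ((-1 : ℝ) ^ j * 2 ^ j / (Nat.factorial (d - j) * Nat.factorial j)) := by
    intro j hj
    have hjd : j ≤ d := Nat.lt_succ_iff.mp (Finset.mem_range.mp hj)
    have e1 : m + j + 1 - (m + 1) = j := by omega
    have e2 : m + 1 + d - (m + 1) + (m + j) = d + m + j := by omega
    have e3 : m + 1 - 1 = m := by omega
    have e4 : ((↑(m + 1 + d) : ℝ) - (↑(m + j) : ℝ)) = ((d - j : ℕ) : ℝ) + 1 := by
      have : ((d - j : ℕ) : ℝ) = (d : ℝ) - j := by
        rw [Nat.cast_sub hjd]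
      rw [this]; push_cast; ring
    rw [e1, e2, e3, e4]
    have hP := factorial_mul_ascPochhammer ℝ (d - j) (d + m + j)
    have e5 : d - j + (d + m + j) = 2 * d + m := by omega
    rw [e5] at hP
    have hPv : (ascPochhammer ℝ (d + m + j)).eval (((d - j : ℕ) : ℝ) + 1) =
        (Nat.factorial (2 * d + m) : ℝ) / (Nat.factorial (d - j) : ℝ) := by
      rw [eq_div_iff (hne _), mul_comm]
      exact hP
    rw [hPv, Nat.cast_choose ℝ (Nat.le_add_right m j)]
    have e6 : m + j - m = j := by omega
    rw [e6]
    rw [pow_add, pow_add]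
    field_simp
    ring
  rw [Finset.sum_congr rfl hstep, ← Finset.mul_sum, key_sum]
  have e7 : m + 1 + d - (m + 1) = d := by omega
  have e8 : 2 * (m + 1 + d) - 2 * (m + 1) = 2 * d := by omega
  rw [e7, e8]
  have hQ := factorial_mul_ascPochhammer ℝ m (2 * d)
  have e9 : m + 2 * d = 2 * d + m := by omega
  rw [e9] at hQ
  have hQv : (ascPochhammer ℝ (2 * d)).eval ((↑(m + 1) : ℝ)) =
      (Nat.factorial (2 * d + m) : ℝ) / (Nat.factorial m : ℝ) := by
    rw [eq_div_iff (hne _), mul_comm]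
    rw [show ((↑(m + 1) : ℝ)) = ((m : ℝ) + 1) by push_cast; ring] at *
    exact hQ
  rw [hQv]
  field_simp
end

section
/- Let p be a polynomial in two variables with real coefficients and let r be a natural number. Suppose there exists a continuous function h : ℝ² → ℝ such that h(x, y) = p(x, y)/(x − y)^r for all (x, y) with x ≠ y. Then (x − y)^r divides p in the polynomial ring ℝ[x, y]. In particular, if the total degree of p is strictly less than r, then p = 0. -/
open MvPolynomial Filter Topology

private lemma finSuccEquiv_diff :
    (MvPolynomial.finSuccEquiv ℝ 1) (MvPolynomial.X 0 - MvPolynomial.X 1) =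
      Polynomial.X - Polynomial.C (MvPolynomial.X 0) := by
  rw [map_sub, MvPolynomial.finSuccEquiv_X_zero]
  congr 1
  have : (1 : Fin 2) = Fin.succ 0 := rfl
  rw [this, MvPolynomial.finSuccEquiv_X_succ]

private lemma diag_dvd (p : MvPolynomial (Fin 2) ℝ)
    (hd : ∀ a : ℝ, MvPolynomial.eval ![a, a] p = 0) :
    (MvPolynomial.X 0 - MvPolynomial.X 1 : MvPolynomial (Fin 2) ℝ) ∣ p := by
  set φ := MvPolynomial.finSuccEquiv ℝ 1 with hφ
  have key : Polynomial.eval (MvPolynomial.X 0 : MvPolynomial (Fin 1) ℝ) (φ p) = 0 := by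
    apply MvPolynomial.funext
    intro v
    rw [map_zero]
    have h1 : MvPolynomial.eval v (Polynomial.eval (MvPolynomial.X 0) (φ p)) =
        Polynomial.eval (v 0) (Polynomial.map (MvPolynomial.eval v) (φ p)) := by
      rw [Polynomial.eval_map, ← Polynomial.eval₂_at_apply, MvPolynomial.eval_X]
    rw [h1, ← MvPolynomial.eval_eq_eval_mv_eval']
    have h2 : (Fin.cons (v 0) v : Fin 2 → ℝ) = ![v 0, v 0] := by
      funext i
      fin_cases i <;> simp
    rw [h2, hd]
  have hdvd : (Polynomial.X - Polynomial.C (MvPolynomial.X 0)) ∣ φ p :=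
    Polynomial.dvd_iff_isRoot.mpr key
  have := map_dvd φ.symm.toAlgHom hdvd
  rw [← finSuccEquiv_diff, ← hφ] at this
  convert this using 1 <;> exact (φ.symm_apply_apply _).symm

/-- If `p ∈ ℝ[x, y]`, `r ∈ ℕ`, and there is a continuous `h : ℝ² → ℝ` with
`h(x,y) = p(x,y)/(x-y)^r` for `x ≠ y`, then `(x - y)^r` divides `p` in `ℝ[x, y]`;
in particular, if the total degree of `p` is less than `r`, then `p = 0`. -/
theorem stmt_14 (p : MvPolynomial (Fin 2) ℝ) (r : ℕ)
    (h : ℝ × ℝ → ℝ) (hc : Continuous h)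
    (heq : ∀ x y : ℝ, x ≠ y → h (x, y) = MvPolynomial.eval ![x, y] p / (x - y) ^ r) :
    ((MvPolynomial.X 0 - MvPolynomial.X 1) ^ r ∣ p) ∧
      (p.totalDegree < r → p = 0) := by
  have main : ∀ (r : ℕ) (p : MvPolynomial (Fin 2) ℝ),
      (∀ x y : ℝ, x ≠ y → h (x, y) = MvPolynomial.eval ![x, y] p / (x - y) ^ r) →
      (MvPolynomial.X 0 - MvPolynomial.X 1 : MvPolynomial (Fin 2) ℝ) ^ r ∣ p := by
    intro r
    induction r with
    | zero => intro p _; simp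
    | succ r ih =>
      intro p hp
      have hdiag : ∀ a : ℝ, MvPolynomial.eval ![a, a] p = 0 := by
        intro a
        have hcont : Continuous fun y : ℝ => MvPolynomial.eval ![a, y] p := by
          apply (MvPolynomial.continuous_eval p).comp
          apply continuous_pi
          intro i
          fin_cases i <;> simp [continuous_const, continuous_id']
        have h1 : Tendsto (fun y : ℝ => MvPolynomial.eval ![a, y] p) (𝓝[≠] a)
            (𝓝 (MvPolynomial.eval ![a, a] p)) :=
          (hcont.tendsto a).mono_left nhdsWithin_le_nhds
        have h2 : Tendsto (fun y : ℝ => h (a, y) * (a - y) ^ (r + 1)) (𝓝[≠] a)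
            (𝓝 (h (a, a) * (a - a) ^ (r + 1))) := by
          have c1 : Continuous fun y : ℝ => h (a, y) :=
            hc.comp (continuous_const.prodMk continuous_id)
          have c2 : Continuous fun y : ℝ => (a - y) ^ (r + 1) :=
            (continuous_const.sub continuous_id).pow _
          exact ((c1.mul c2).tendsto a).mono_left nhdsWithin_le_nhds
        have heq' : (fun y : ℝ => h (a, y) * (a - y) ^ (r + 1)) =ᶠ[𝓝[≠] a]
            (fun y : ℝ => MvPolynomial.eval ![a, y] p) := by
          filter_upwards [self_mem_nhdsWithin] with y hy
          have hay : a ≠ y := fun e => hy e.symm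
          rw [hp a y hay, div_mul_cancel₀]
          exact pow_ne_zero _ (sub_ne_zero.mpr hay)
        have h2' : Tendsto (fun y : ℝ => MvPolynomial.eval ![a, y] p) (𝓝[≠] a)
            (𝓝 (h (a, a) * (a - a) ^ (r + 1))) := h2.congr' heq'
        have := tendsto_nhds_unique h1 h2'
        simpa using this
      obtain ⟨q, hq⟩ := diag_dvd p hdiag
      have hq' : ∀ x y : ℝ, x ≠ y → h (x, y) = MvPolynomial.eval ![x, y] q / (x - y) ^ r := by
        intro x y hxy
        have hxy' : x - y ≠ 0 := sub_ne_zero.mpr hxy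
        rw [hp x y hxy, hq, map_mul]
        have : MvPolynomial.eval ![x, y]
            (MvPolynomial.X 0 - MvPolynomial.X 1 : MvPolynomial (Fin 2) ℝ) = x - y := by
          simp
        rw [this, pow_succ, mul_comm ((x - y) ^ r) (x - y),
          mul_div_mul_left _ _ hxy']
      obtain ⟨s, hs⟩ := ih q hq'
      exact ⟨s, by rw [hq, hs]; ring⟩
  have hdvd := main r p heq
  refine ⟨hdvd, fun hdeg => ?_⟩
  by_contra hp0
  obtain ⟨q, hq⟩ := hdvd
  set φ := MvPolynomial.finSuccEquiv ℝ 1 with hφ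
  have hq0 : q ≠ 0 := by
    rintro rfl
    rw [mul_zero] at hq
    exact hp0 hq
  have hφp : φ p = (Polynomial.X - Polynomial.C (MvPolynomial.X 0)) ^ r * φ q := by
    rw [hq, map_mul, map_pow, finSuccEquiv_diff]
  have hmon : ((Polynomial.X - Polynomial.C (MvPolynomial.X 0 : MvPolynomial (Fin 1) ℝ)) ^ r).Monic :=
    (Polynomial.monic_X_sub_C _).pow r
  have hφq0 : φ q ≠ 0 := fun e => hq0 (by
    have := congrArg φ.symm e
    simpa using this)
  have hnd : (φ p).natDegree = r + (φ q).natDegree := by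
    rw [hφp, Polynomial.natDegree_mul hmon.ne_zero hφq0]
    congr 1
    simp [Polynomial.natDegree_pow]
  have hle : (φ p).natDegree ≤ p.totalDegree := by
    rw [MvPolynomial.natDegree_finSuccEquiv]
    exact MvPolynomial.degreeOf_le_totalDegree p 0
  omega
end

section
/- For m ∈ ℕ and λ ∈ ℂ, let e(m, λ) denote the linear functional on the polynomial ring ℂ[z] given by ⟨e(m, λ), g⟩ = g^{(m)}(λ) (the m-th derivative of g evaluated at λ). Let C be a finite-dimensional subspace of the dual space of ℂ[z], let V_C = { g ∈ ℂ[z] : φ(g) = 0 for all φ ∈ C }, and assume that every linear functional on ℂ[z] that vanishes on V_C belongs to C. Let λ ∈ ℂ with λ ≠ 0, let n, M be natural numbers with M > n, and assume: (a) the multiplication map g ↦ z^M g maps V_C into V_C; and (b) there exist a₀, …, a_n ∈ ℂ with a_n ≠ 0 such that the functional Σ_{m=0}^n a_m e(m, λ) belongs to C. Then e(m, λ) ∈ C for every m with 0 ≤ m ≤ n. -/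
/-- The linear functional `e(m, λ)` on `ℂ[z]` given by `g ↦ g^{(m)}(λ)`. -/
noncomputable def pointCondition (m : ℕ) (lam : ℂ) : Module.Dual ℂ (Polynomial ℂ) :=
  (Polynomial.leval lam).comp ((Polynomial.derivative : Module.End ℂ (Polynomial ℂ)) ^ m)

lemma pointCondition_apply (m : ℕ) (lam : ℂ) (g : Polynomial ℂ) :
    pointCondition m lam g = (Polynomial.derivative^[m] g).eval lam := by
  simp [pointCondition, Module.End.pow_apply, Polynomial.leval_apply]

lemma sum_comp_key (n : ℕ) (lam : ℂ) (a : ℕ → ℂ) (p : Polynomial ℂ)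
    (hp : p.eval lam = 0) :
    (∑ m ∈ Finset.range (n + 1), a m • pointCondition m lam) ∘ₗ (LinearMap.mulLeft ℂ p)
      = ∑ j ∈ Finset.range n,
          (∑ m ∈ Finset.Ico (j + 1) (n + 1),
            a m * (m.choose j : ℂ) * ((Polynomial.derivative^[m - j] p).eval lam)) •
            pointCondition j lam := by
  refine LinearMap.ext fun g => ?_
  have key : ∀ m : ℕ, pointCondition m lam (p * g)
      = ∑ j ∈ Finset.range m,
          (m.choose j : ℂ) * ((Polynomial.derivative^[m - j] p).eval lam)
            * pointCondition j lam g := by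
    intro m
    rw [pointCondition_apply, Polynomial.iterate_derivative_mul, Polynomial.eval_finset_sum,
      Finset.sum_range_succ]
    simp only [nsmul_eq_mul, Nat.sub_self, Function.iterate_zero, id_eq, hp,
      Polynomial.eval_mul, Polynomial.eval_natCast, zero_mul, mul_zero, add_zero]
    refine Finset.sum_congr rfl fun j hj => ?_
    rw [pointCondition_apply]
    ring
  simp only [LinearMap.coe_sum, LinearMap.comp_apply, Finset.sum_apply,
    LinearMap.smul_apply, smul_eq_mul, LinearMap.mulLeft_apply]
  calc ∑ m ∈ Finset.range (n + 1), a m * pointCondition m lam (p * g)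
      = ∑ m ∈ Finset.range (n + 1), ∑ j ∈ Finset.range m,
          a m * ((m.choose j : ℂ) * ((Polynomial.derivative^[m - j] p).eval lam)
            * pointCondition j lam g) := by
        exact Finset.sum_congr rfl fun m _ => by rw [key, Finset.mul_sum]
    _ = ∑ j ∈ Finset.range n, ∑ m ∈ Finset.Ico (j + 1) (n + 1),
          a m * ((m.choose j : ℂ) * ((Polynomial.derivative^[m - j] p).eval lam)
            * pointCondition j lam g) := by
        refine Finset.sum_comm' fun m j => ?_
        simp only [Finset.mem_range, Finset.mem_Ico]
        omega
    _ = _ := by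
        refine Finset.sum_congr rfl fun j hj => ?_
        rw [Finset.sum_mul]
        exact Finset.sum_congr rfl fun m hm => by ring

/-- Let `C` be a finite-dimensional space of linear functionals on `ℂ[z]`, let
`V_C = {g : φ(g) = 0 ∀ φ ∈ C}`, and assume every functional vanishing on `V_C` lies in
`C`. If `λ ≠ 0`, `M > n`, multiplication by `z^M` maps `V_C` into itself, and some
functional `Σ_{m=0}^n a_m e(m, λ)` with `a_n ≠ 0` lies in `C`, then `e(m, λ) ∈ C` for all
`0 ≤ m ≤ n`. -/
theorem stmt_15 (C : Submodule ℂ (Module.Dual ℂ (Polynomial ℂ)))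
    (hfin : FiniteDimensional ℂ C)
    (V : Set (Polynomial ℂ)) (hV : V = {g : Polynomial ℂ | ∀ φ ∈ C, φ g = 0})
    (hsat : ∀ φ : Module.Dual ℂ (Polynomial ℂ), (∀ g ∈ V, φ g = 0) → φ ∈ C)
    (lam : ℂ) (hlam : lam ≠ 0) (n M : ℕ) (hM : n < M)
    (hinv : ∀ g ∈ V, Polynomial.X ^ M * g ∈ V)
    (a : ℕ → ℂ) (han : a n ≠ 0)
    (hc : (∑ m ∈ Finset.range (n + 1), a m • pointCondition m lam) ∈ C) :
    ∀ m ≤ n, pointCondition m lam ∈ C := by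
  revert hM han hc
  induction n generalizing a with
  | zero =>
    intro hM han hc m hm
    interval_cases m
    have h0 : pointCondition 0 lam
        = (a 0)⁻¹ • (∑ m ∈ Finset.range 1, a m • pointCondition m lam) := by
      rw [Finset.sum_range_one, smul_smul, inv_mul_cancel₀ han, one_smul]
    rw [h0]
    exact C.smul_mem _ hc
  | succ k ih =>
    intro hM han hc
    set p : Polynomial ℂ := Polynomial.X ^ M - Polynomial.C (lam ^ M) with hpdef
    have hp0 : p.eval lam = 0 := by simp [hpdef]
    set c := ∑ m ∈ Finset.range (k + 1 + 1), a m • pointCondition m lam with hcdef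
    set φ := c ∘ₗ LinearMap.mulLeft ℂ p with hφ
    have hφC : φ ∈ C := by
      apply hsat
      intro g hg
      have h1 : Polynomial.X ^ M * g ∈ V := hinv g hg
      rw [hV] at h1 hg
      have h2 : c (Polynomial.X ^ M * g) = 0 := h1 c hc
      have h3 : c g = 0 := hg c hc
      have hpg : p * g = Polynomial.X ^ M * g - lam ^ M • g := by
        rw [hpdef, Polynomial.smul_eq_C_mul]; ring
      simp [hφ, hpg, h2, h3]
    set b : ℕ → ℂ := fun j => ∑ m ∈ Finset.Ico (j + 1) (k + 1 + 1),
        a m * (m.choose j : ℂ) * ((Polynomial.derivative^[m - j] p).eval lam) with hb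
    have hφeq : φ = ∑ j ∈ Finset.range (k + 1), b j • pointCondition j lam := by
      rw [hφ, hcdef]
      exact sum_comp_key (k + 1) lam a p hp0
    have hbk : b k ≠ 0 := by
      have hIco : Finset.Ico (k + 1) (k + 1 + 1) = {k + 1} := by
        ext x
        simp only [Finset.mem_Ico, Finset.mem_singleton]
        omega
      have hd : (Polynomial.derivative^[k + 1 - k] p).eval lam
          = (M : ℂ) * lam ^ (M - 1) := by
        have h1 : k + 1 - k = 1 := by omega
        have h2 : Polynomial.derivative p = Polynomial.C (M : ℂ) * Polynomial.X ^ (M - 1) := by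
          rw [hpdef, map_sub, Polynomial.derivative_C,
            Polynomial.derivative_X_pow, sub_zero]
        rw [h1, Function.iterate_one, h2]
        simp
      rw [hb]
      simp only [hIco, Finset.sum_singleton, hd]
      refine mul_ne_zero (mul_ne_zero han ?_)
        (mul_ne_zero (Nat.cast_ne_zero.mpr (by omega)) (pow_ne_zero _ hlam))
      rw [Nat.choose_succ_self_right]
      exact Nat.cast_ne_zero.mpr (by omega)
    have hind : ∀ m ≤ k, pointCondition m lam ∈ C :=
      ih b (by omega) hbk (hφeq ▸ hφC)
    intro m hm
    by_cases h : m ≤ k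
    · exact hind m h
    · have hmk : m = k + 1 := by omega
      subst hmk
      have hsplit : a (k + 1) • pointCondition (k + 1) lam
          = c - ∑ m ∈ Finset.range (k + 1), a m • pointCondition m lam := by
        rw [hcdef, Finset.sum_range_succ]; abel
      have hmem : a (k + 1) • pointCondition (k + 1) lam ∈ C := by
        rw [hsplit]
        exact C.sub_mem hc (Submodule.sum_mem _ fun i hi =>
          C.smul_mem _ (hind i (Nat.lt_succ_iff.mp (Finset.mem_range.mp hi))))
      have := C.smul_mem (a (k + 1))⁻¹ hmem
      rwa [smul_smul, inv_mul_cancel₀ han, one_smul] at this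
end

section
/- Fix s₁, s₂ ∈ ℝ and define τ(x) = (s₁ + x)²/2 + s₂, u₁(x) = −3((x + s₁)² − 2 s₂)/(2 τ(x)²), u₀(x) = −6 s₂ (x + s₁)/τ(x)³, and Ψ(x, z) = (1 − (s₁ + x)/(τ(x) z)) e^{xz}. Then for every z ∈ ℂ with z ≠ 0 and every x ∈ ℝ with τ(x) ≠ 0, ∂³Ψ/∂x³ (x, z) + u₁(x) · ∂Ψ/∂x (x, z) + u₀(x) · Ψ(x, z) = z³ · Ψ(x, z). -/
open Complex

private lemma hasDerivAt_TT (s c : ℂ) (w : ℂ) :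
    HasDerivAt (fun w : ℂ => (s + w) ^ 2 / 2 + c) (s + w) w := by
  have ha : HasDerivAt (fun w : ℂ => s + w) 1 w := (hasDerivAt_id w).const_add s
  have := ((ha.pow 2).div_const 2).add_const c
  exact this.congr_deriv (by norm_num)

private lemma LP (s c z : ℂ) (hz : z ≠ 0) (w : ℂ) (hT : (s + w) ^ 2 / 2 + c ≠ 0) :
    HasDerivAt (fun w : ℂ => 1 - (s + w) / (((s + w) ^ 2 / 2 + c) * z))
      (((s + w) ^ 2 - ((s + w) ^ 2 / 2 + c)) / (((s + w) ^ 2 / 2 + c) ^ 2 * z)) w := by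
  have ha : HasDerivAt (fun w : ℂ => s + w) 1 w := (hasDerivAt_id w).const_add s
  have hden : HasDerivAt (fun w : ℂ => ((s + w) ^ 2 / 2 + c) * z) ((s + w) * z) w :=
    (hasDerivAt_TT s c w).mul_const z
  have hdne : ((s + w) ^ 2 / 2 + c) * z ≠ 0 := mul_ne_zero hT hz
  have H := (ha.div hden hdne).const_sub 1
  refine H.congr_deriv (Eq.symm ?_)
  rw [← neg_div, div_eq_div_iff (mul_ne_zero (pow_ne_zero 2 hT) hz) (pow_ne_zero 2 hdne)]
  ring

private lemma LA (s c z : ℂ) (hz : z ≠ 0) (w : ℂ) (hT : (s + w) ^ 2 / 2 + c ≠ 0) :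
    HasDerivAt (fun w : ℂ => ((s + w) ^ 2 - ((s + w) ^ 2 / 2 + c)) / (((s + w) ^ 2 / 2 + c) ^ 2 * z))
      ((3 * (s + w) * ((s + w) ^ 2 / 2 + c) - 2 * (s + w) ^ 3) / (((s + w) ^ 2 / 2 + c) ^ 3 * z)) w := by
  have ha : HasDerivAt (fun w : ℂ => s + w) 1 w := (hasDerivAt_id w).const_add s
  have hnum : HasDerivAt (fun w : ℂ => (s + w) ^ 2 - ((s + w) ^ 2 / 2 + c)) (s + w) w := by
    have := (ha.pow 2).sub (hasDerivAt_TT s c w)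
    exact this.congr_deriv (by norm_num; ring)
  have hden : HasDerivAt (fun w : ℂ => ((s + w) ^ 2 / 2 + c) ^ 2 * z)
      (2 * ((s + w) ^ 2 / 2 + c) * (s + w) * z) w := by
    have := ((hasDerivAt_TT s c w).pow 2).mul_const z
    exact this.congr_deriv (by norm_num)
  have hdne : ((s + w) ^ 2 / 2 + c) ^ 2 * z ≠ 0 := mul_ne_zero (pow_ne_zero 2 hT) hz
  have H := hnum.div hden hdne
  refine H.congr_deriv (Eq.symm ?_)
  rw [div_eq_div_iff (mul_ne_zero (pow_ne_zero 3 hT) hz) (pow_ne_zero 2 hdne)]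
  ring

private lemma LB (s c z : ℂ) (hz : z ≠ 0) (w : ℂ) (hT : (s + w) ^ 2 / 2 + c ≠ 0) :
    HasDerivAt (fun w : ℂ => (3 * (s + w) * ((s + w) ^ 2 / 2 + c) - 2 * (s + w) ^ 3) / (((s + w) ^ 2 / 2 + c) ^ 3 * z))
      ((3 * ((s + w) ^ 2 / 2 + c) ^ 2 - 12 * (s + w) ^ 2 * ((s + w) ^ 2 / 2 + c) + 6 * (s + w) ^ 4) /
        (((s + w) ^ 2 / 2 + c) ^ 4 * z)) w := by
  have ha : HasDerivAt (fun w : ℂ => s + w) 1 w := (hasDerivAt_id w).const_add s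
  have hnum : HasDerivAt (fun w : ℂ => 3 * (s + w) * ((s + w) ^ 2 / 2 + c) - 2 * (s + w) ^ 3)
      (3 * ((s + w) ^ 2 / 2 + c) - 3 * (s + w) ^ 2) w := by
    have := (((ha.const_mul 3).mul (hasDerivAt_TT s c w))).sub ((ha.pow 3).const_mul 2)
    exact this.congr_deriv (by norm_num; ring)
  have hden : HasDerivAt (fun w : ℂ => ((s + w) ^ 2 / 2 + c) ^ 3 * z)
      (3 * ((s + w) ^ 2 / 2 + c) ^ 2 * (s + w) * z) w := by
    have := ((hasDerivAt_TT s c w).pow 3).mul_const z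
    exact this.congr_deriv (by norm_num)
  have hdne : ((s + w) ^ 2 / 2 + c) ^ 3 * z ≠ 0 := mul_ne_zero (pow_ne_zero 3 hT) hz
  have H := hnum.div hden hdne
  refine H.congr_deriv (Eq.symm ?_)
  rw [div_eq_div_iff (mul_ne_zero (pow_ne_zero 4 hT) hz) (pow_ne_zero 2 hdne)]
  ring

private lemma LExp (z : ℂ) (y : ℝ) :
    HasDerivAt (fun y : ℝ => Complex.exp ((y : ℂ) * z)) (Complex.exp ((y : ℂ) * z) * z) y := by
  have : HasDerivAt (fun w : ℂ => Complex.exp (w * z)) (Complex.exp ((y : ℂ) * z) * z) (y : ℂ) := by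
    have := ((hasDerivAt_id ((y : ℂ))).mul_const z).cexp
    simpa using this
  exact this.comp_ofReal


private lemma keyid (a c z t : ℂ) (hz : z ≠ 0) (hT : t ≠ 0) (hct : c = t - a ^ 2 / 2) :
    ((3 * t ^ 2 - 12 * a ^ 2 * t + 6 * a ^ 4) / (t ^ 4 * z)
      + 3 * z * ((3 * a * t - 2 * a ^ 3) / (t ^ 3 * z))
      + 3 * z ^ 2 * ((a ^ 2 - t) / (t ^ 2 * z))
      + z ^ 3 * (1 - a / (t * z)))
    + (-3 * (a ^ 2 - 2 * c) / (2 * t ^ 2)) *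
        ((a ^ 2 - t) / (t ^ 2 * z) + z * (1 - a / (t * z)))
    + (-6 * c * a / t ^ 3) * (1 - a / (t * z))
    = z ^ 3 * (1 - a / (t * z)) := by
  have hD : (2 : ℂ) * t ^ 4 * z ≠ 0 := by
    simp [hT, hz]
  have e1 : (3 * t ^ 2 - 12 * a ^ 2 * t + 6 * a ^ 4) / (t ^ 4 * z)
      = (2 * (3 * t ^ 2 - 12 * a ^ 2 * t + 6 * a ^ 4)) / (2 * t ^ 4 * z) := by
    rw [div_eq_div_iff (by simp [hT, hz]) hD]; ring
  have e2 : 3 * z * ((3 * a * t - 2 * a ^ 3) / (t ^ 3 * z))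
      = (6 * t * z * (3 * a * t - 2 * a ^ 3)) / (2 * t ^ 4 * z) := by
    rw [mul_div_assoc', div_eq_div_iff (by simp [hT, hz]) hD]; ring
  have e3 : 3 * z ^ 2 * ((a ^ 2 - t) / (t ^ 2 * z))
      = (6 * t ^ 2 * z ^ 2 * (a ^ 2 - t)) / (2 * t ^ 4 * z) := by
    rw [mul_div_assoc', div_eq_div_iff (by simp [hT, hz]) hD]; ring
  have e0 : (1 : ℂ) - a / (t * z) = (t * z - a) / (t * z) := by
    rw [sub_div, div_self (show t * z ≠ 0 by simp [hT, hz])]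
  have e4 : z ^ 3 * ((1 : ℂ) - a / (t * z))
      = (2 * t ^ 3 * z ^ 3 * (t * z - a)) / (2 * t ^ 4 * z) := by
    rw [e0, mul_div_assoc', div_eq_div_iff (by simp [hT, hz]) hD]; ring
  have e5 : (-3 * (a ^ 2 - 2 * c) / (2 * t ^ 2)) *
        ((a ^ 2 - t) / (t ^ 2 * z) + z * (1 - a / (t * z)))
      = (-3 * (a ^ 2 - 2 * c) * (a ^ 2 - t + t ^ 2 * z ^ 2 - a * t * z)) / (2 * t ^ 4 * z) := by
    have einner : (a ^ 2 - t) / (t ^ 2 * z) + z * (1 - a / (t * z))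
        = (a ^ 2 - t + t ^ 2 * z ^ 2 - a * t * z) / (t ^ 2 * z) := by
      rw [e0, mul_div_assoc', div_add_div _ _ (by simp [hT, hz]) (by simp [hT, hz]),
        div_eq_div_iff (by simp [hT, hz]) (by simp [hT, hz])]
      ring
    rw [einner, div_mul_div_comm, div_eq_div_iff (by simp [hT, hz]) hD]
    ring
  have e6 : (-6 * c * a / t ^ 3) * (1 - a / (t * z))
      = (-12 * c * a * (t * z - a)) / (2 * t ^ 4 * z) := by
    rw [e0, div_mul_div_comm, div_eq_div_iff (by simp [hT, hz]) hD]
    ring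
  rw [e1, e2, e3, e4, e5, e6, ← add_div, ← add_div, ← add_div,
    ← add_div, ← add_div, div_eq_div_iff hD hD, hct]
  ring

set_option maxHeartbeats 1000000 in
/-- Example 7.1: with `τ(x) = (s₁+x)²/2 + s₂`, `u₁ = -3((x+s₁)² - 2s₂)/(2τ²)`,
`u₀ = -6s₂(x+s₁)/τ³`, and wave function `Ψ(x,z) = (1 - (s₁+x)/(τ(x) z)) e^{xz}`, one has
`Ψ''' + u₁ Ψ' + u₀ Ψ = z³ Ψ` for every `z ≠ 0` and every `x` with `τ(x) ≠ 0`. -/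
theorem stmt_16 (s₁ s₂ : ℝ) (τ u₀ u₁ : ℝ → ℝ)
    (hτ : ∀ x : ℝ, τ x = (s₁ + x) ^ 2 / 2 + s₂)
    (hu₁ : ∀ x : ℝ, u₁ x = -3 * ((x + s₁) ^ 2 - 2 * s₂) / (2 * (τ x) ^ 2))
    (hu₀ : ∀ x : ℝ, u₀ x = -6 * s₂ * (x + s₁) / (τ x) ^ 3)
    (Ψ : ℝ → ℂ → ℂ)
    (hΨ : ∀ (x : ℝ) (z : ℂ),
      Ψ x z = (1 - ((s₁ : ℂ) + (x : ℂ)) / ((τ x : ℂ) * z)) * Complex.exp ((x : ℂ) * z)) :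
    ∀ z : ℂ, z ≠ 0 → ∀ x : ℝ, τ x ≠ 0 →
      iteratedDeriv 3 (fun x' => Ψ x' z) x + (u₁ x : ℂ) * deriv (fun x' => Ψ x' z) x +
          (u₀ x : ℂ) * Ψ x z = z ^ 3 * Ψ x z := by
  intro z hz x hτx
  have hcont : Continuous τ := by
    have : τ = fun y => (s₁ + y) ^ 2 / 2 + s₂ := funext hτ
    rw [this]; continuity
  have hUopen : IsOpen {y : ℝ | τ y ≠ 0} := by
    have h0 : {y : ℝ | τ y ≠ 0} = τ ⁻¹' ({(0 : ℝ)}ᶜ) := rfl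
    rw [h0]; exact isOpen_compl_singleton.preimage hcont
  have hTC : ∀ y : ℝ, ((τ y : ℝ) : ℂ) = ((s₁ : ℂ) + (y : ℂ)) ^ 2 / 2 + (s₂ : ℂ) := by
    intro y; rw [hτ]; push_cast; ring
  have hTne : ∀ y : ℝ, τ y ≠ 0 → ((s₁ : ℂ) + (y : ℂ)) ^ 2 / 2 + (s₂ : ℂ) ≠ 0 := by
    intro y hy
    rw [← hTC]
    exact Complex.ofReal_ne_zero.mpr hy
  set F : ℝ → ℂ := fun x' => Ψ x' z with hF
  have hFe : F = fun y : ℝ =>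
      (1 - ((s₁ : ℂ) + (y : ℂ)) / ((((s₁ : ℂ) + (y : ℂ)) ^ 2 / 2 + (s₂ : ℂ)) * z)) *
        Complex.exp ((y : ℂ) * z) := by
    funext y
    rw [hF]
    simp only
    rw [hΨ, hTC]
  set g1 : ℝ → ℂ := fun y =>
      ((((s₁ : ℂ) + y) ^ 2 - (((s₁ : ℂ) + y) ^ 2 / 2 + s₂)) / (((( s₁ : ℂ) + y) ^ 2 / 2 + s₂) ^ 2 * z)
        + z * (1 - ((s₁ : ℂ) + y) / (((( s₁ : ℂ) + y) ^ 2 / 2 + s₂) * z))) *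
      Complex.exp ((y : ℂ) * z) with hg1
  set g2 : ℝ → ℂ := fun y =>
      ((3 * ((s₁ : ℂ) + y) * (((s₁ : ℂ) + y) ^ 2 / 2 + s₂) - 2 * ((s₁ : ℂ) + y) ^ 3) /
          (((( s₁ : ℂ) + y) ^ 2 / 2 + s₂) ^ 3 * z)
        + 2 * z * ((((s₁ : ℂ) + y) ^ 2 - (((s₁ : ℂ) + y) ^ 2 / 2 + s₂)) /
          (((( s₁ : ℂ) + y) ^ 2 / 2 + s₂) ^ 2 * z))
        + z ^ 2 * (1 - ((s₁ : ℂ) + y) / (((( s₁ : ℂ) + y) ^ 2 / 2 + s₂) * z))) *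
      Complex.exp ((y : ℂ) * z) with hg2
  set g3 : ℝ → ℂ := fun y =>
      ((3 * (((s₁ : ℂ) + y) ^ 2 / 2 + s₂) ^ 2 - 12 * ((s₁ : ℂ) + y) ^ 2 * (((s₁ : ℂ) + y) ^ 2 / 2 + s₂)
          + 6 * ((s₁ : ℂ) + y) ^ 4) / (((( s₁ : ℂ) + y) ^ 2 / 2 + s₂) ^ 4 * z)
        + 3 * z * ((3 * ((s₁ : ℂ) + y) * (((s₁ : ℂ) + y) ^ 2 / 2 + s₂) - 2 * ((s₁ : ℂ) + y) ^ 3) /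
          (((( s₁ : ℂ) + y) ^ 2 / 2 + s₂) ^ 3 * z))
        + 3 * z ^ 2 * ((((s₁ : ℂ) + y) ^ 2 - (((s₁ : ℂ) + y) ^ 2 / 2 + s₂)) /
          (((( s₁ : ℂ) + y) ^ 2 / 2 + s₂) ^ 2 * z))
        + z ^ 3 * (1 - ((s₁ : ℂ) + y) / (((( s₁ : ℂ) + y) ^ 2 / 2 + s₂) * z))) *
      Complex.exp ((y : ℂ) * z) with hg3
  have h1 : ∀ y : ℝ, τ y ≠ 0 → HasDerivAt F (g1 y) y := by
    intro y hy
    rw [hFe, hg1]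
    have hP := (LP s₁ s₂ z hz (y : ℂ) (hTne y hy)).comp_ofReal
    have := hP.mul (LExp z y)
    refine this.congr_deriv (Eq.symm ?_)
    ring
  have h2 : ∀ y : ℝ, τ y ≠ 0 → HasDerivAt g1 (g2 y) y := by
    intro y hy
    rw [hg1, hg2]
    have hQ := ((LA s₁ s₂ z hz (y : ℂ) (hTne y hy)).comp_ofReal).add
      (((LP s₁ s₂ z hz (y : ℂ) (hTne y hy)).comp_ofReal).const_mul z)
    have := hQ.mul (LExp z y)
    refine this.congr_deriv (Eq.symm ?_)
    simp only [Pi.add_apply]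
    ring
  have h3 : ∀ y : ℝ, τ y ≠ 0 → HasDerivAt g2 (g3 y) y := by
    intro y hy
    rw [hg2, hg3]
    have hQ := (((LB s₁ s₂ z hz (y : ℂ) (hTne y hy)).comp_ofReal).add
      (((LA s₁ s₂ z hz (y : ℂ) (hTne y hy)).comp_ofReal).const_mul (2 * z))).add
      (((LP s₁ s₂ z hz (y : ℂ) (hTne y hy)).comp_ofReal).const_mul (z ^ 2))
    have := hQ.mul (LExp z y)
    refine this.congr_deriv (Eq.symm ?_)
    simp only [Pi.add_apply]
    ring
  have hd1 : ∀ y : ℝ, τ y ≠ 0 → deriv F y = g1 y := fun y hy => (h1 y hy).deriv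
  have hev1 : ∀ y : ℝ, τ y ≠ 0 → deriv F =ᶠ[nhds y] g1 := fun y hy =>
    Filter.eventually_of_mem (hUopen.mem_nhds hy) (fun t ht => hd1 t ht)
  have hd2 : ∀ y : ℝ, τ y ≠ 0 → deriv (deriv F) y = g2 y := fun y hy =>
    ((hev1 y hy).deriv_eq).trans (h2 y hy).deriv
  have hev2 : ∀ y : ℝ, τ y ≠ 0 → deriv (deriv F) =ᶠ[nhds y] g2 := fun y hy =>
    Filter.eventually_of_mem (hUopen.mem_nhds hy) (fun t ht => hd2 t ht)
  have hd3 : deriv (deriv (deriv F)) x = g3 x :=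
    ((hev2 x hτx).deriv_eq).trans (h3 x hτx).deriv
  have hit : iteratedDeriv 3 F x = g3 x := by
    rw [show (3 : ℕ) = 2 + 1 from rfl, iteratedDeriv_succ,
      show (2 : ℕ) = 1 + 1 from rfl, iteratedDeriv_succ, iteratedDeriv_one]
    exact hd3
  rw [hit, hd1 x hτx, hΨ x z, hTC x, hg1, hg3]
  have hu1c : ((u₁ x : ℝ) : ℂ)
      = -3 * (((s₁ : ℂ) + x) ^ 2 - 2 * s₂) / (2 * (((s₁ : ℂ) + x) ^ 2 / 2 + s₂) ^ 2) := by
    rw [hu₁, hτ]; push_cast; ring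
  have hu0c : ((u₀ x : ℝ) : ℂ)
      = -6 * s₂ * ((s₁ : ℂ) + x) / (((s₁ : ℂ) + x) ^ 2 / 2 + s₂) ^ 3 := by
    rw [hu₀, hτ]; push_cast; ring
  rw [hu1c, hu0c]
  have hTx := hTne x hτx
  have key := keyid ((s₁ : ℂ) + x) (s₂ : ℂ) z (((s₁ : ℂ) + x) ^ 2 / 2 + s₂) hz hTx (by ring)
  beta_reduce
  linear_combination Complex.exp ((x : ℂ) * z) * key
end

section
/- Fix s₁, s₂ ∈ ℝ and define τ(x) = (s₁ + x)²/2 + s₂, u₁(x) = −3((x + s₁)² − 2 s₂)/(2 τ(x)²), u₀(x) = −6 s₂ (x + s₁)/τ(x)³, and Ψ*(x, z) = (1 + (s₁ + x)/(τ(x) z) + 1/(τ(x) z²)) e^{−xz}. Then for every z ∈ ℂ with z ≠ 0 and every x ∈ ℝ with τ(x) ≠ 0, −∂³Ψ*/∂x³ (x, z) − u₁(x) · ∂Ψ*/∂x (x, z) + (u₀(x) − u₁'(x)) · Ψ*(x, z) = z³ · Ψ*(x, z). -/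
set_option maxHeartbeats 1600000

noncomputable def W (s₁ : ℝ) (y : ℝ) : ℂ := (s₁ : ℂ) + (y : ℂ)
noncomputable def Tc (s₁ s₂ : ℝ) (y : ℝ) : ℂ := W s₁ y ^ 2 / 2 + (s₂ : ℂ)
noncomputable def Ee (z : ℂ) (y : ℝ) : ℂ := Complex.exp (-((y : ℂ) * z))

noncomputable def P0 (s₁ s₂ : ℝ) (z : ℂ) (y : ℝ) : ℂ :=
  ((1 : ℂ) + (1 : ℂ) * z ^ 2 * (s₂ : ℂ)) + ((1 : ℂ) * z) * W s₁ y + (((1 : ℂ)/2) * z ^ 2) * W s₁ y ^ 2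

noncomputable def DP0 (s₁ s₂ : ℝ) (z : ℂ) (y : ℝ) : ℂ :=
  ((1 : ℂ) * z) + ((1 : ℂ) * z ^ 2) * W s₁ y

noncomputable def P1 (s₁ s₂ : ℝ) (z : ℂ) (y : ℝ) : ℂ :=
  ((-1 : ℂ) * z ^ 3 * (s₂ : ℂ) ^ 2) + ((-1 : ℂ) + (-1 : ℂ) * z ^ 2 * (s₂ : ℂ)) * W s₁ y + ((-1 : ℂ) * z + (-1 : ℂ) * z ^ 3 * (s₂ : ℂ)) * W s₁ y ^ 2 + (((-1 : ℂ)/2) * z ^ 2) * W s₁ y ^ 3 + (((-1 : ℂ)/4) * z ^ 3) * W s₁ y ^ 4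

noncomputable def DP1 (s₁ s₂ : ℝ) (z : ℂ) (y : ℝ) : ℂ :=
  ((-1 : ℂ) + (-1 : ℂ) * z ^ 2 * (s₂ : ℂ)) + ((-2 : ℂ) * z + (-2 : ℂ) * z ^ 3 * (s₂ : ℂ)) * W s₁ y + (((-3 : ℂ)/2) * z ^ 2) * W s₁ y ^ 2 + ((-1 : ℂ) * z ^ 3) * W s₁ y ^ 3

noncomputable def P2 (s₁ s₂ : ℝ) (z : ℂ) (y : ℝ) : ℂ :=
  ((-1 : ℂ) * (s₂ : ℂ) + (-1 : ℂ) * z ^ 2 * (s₂ : ℂ) ^ 2 + (1 : ℂ) * z ^ 4 * (s₂ : ℂ) ^ 3) + ((-1 : ℂ) * z * (s₂ : ℂ) + (1 : ℂ) * z ^ 3 * (s₂ : ℂ) ^ 2) * W s₁ y + (((3 : ℂ)/2) + (1 : ℂ) * z ^ 2 * (s₂ : ℂ) + ((3 : ℂ)/2) * z ^ 4 * (s₂ : ℂ) ^ 2) * W s₁ y ^ 2 + (((3 : ℂ)/2) * z + (1 : ℂ) * z ^ 3 * (s₂ : ℂ)) * W s₁ y ^ 3 + (((3 : ℂ)/4)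 * z ^ 2 + ((3 : ℂ)/4) * z ^ 4 * (s₂ : ℂ)) * W s₁ y ^ 4 + (((1 : ℂ)/4) * z ^ 3) * W s₁ y ^ 5 + (((1 : ℂ)/8) * z ^ 4) * W s₁ y ^ 6

noncomputable def DP2 (s₁ s₂ : ℝ) (z : ℂ) (y : ℝ) : ℂ :=
  ((-1 : ℂ) * z * (s₂ : ℂ) + (1 : ℂ) * z ^ 3 * (s₂ : ℂ) ^ 2) + ((3 : ℂ) + (2 : ℂ) * z ^ 2 * (s₂ : ℂ) + (3 : ℂ) * z ^ 4 * (s₂ : ℂ) ^ 2) * W s₁ y + (((9 : ℂ)/2) * z + (3 : ℂ) * z ^ 3 * (s₂ : ℂ)) * W s₁ y ^ 2 + ((3 : ℂ) * z ^ 2 + (3 : ℂ) * z ^ 4 * (s₂ : ℂ)) * W s₁ y ^ 3 + (((5 : ℂ)/4) * z ^ 3) * W s₁ y ^ 4 + (((3 : ℂ)/4) * z ^ 4) * W s₁ y ^ 5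

noncomputable def P3 (s₁ s₂ : ℝ) (z : ℂ) (y : ℝ) : ℂ :=
  ((2 : ℂ) * z ^ 3 * (s₂ : ℂ) ^ 3 + (-1 : ℂ) * z ^ 5 * (s₂ : ℂ) ^ 4) + ((6 : ℂ) * (s₂ : ℂ) + (6 : ℂ) * z ^ 2 * (s₂ : ℂ) ^ 2 + (-1 : ℂ) * z ^ 4 * (s₂ : ℂ) ^ 3) * W s₁ y + ((6 : ℂ) * z * (s₂ : ℂ) + (-2 : ℂ) * z ^ 5 * (s₂ : ℂ) ^ 3) * W s₁ y ^ 2 + ((-3 : ℂ) + ((-3 : ℂ)/2) * z ^ 4 * (s₂ : ℂ) ^ 2) * W s₁ y ^ 3 + ((-3 : ℂ) * z + ((-3 : ℂ)/2) * z ^ 3 * (s₂ : ℂ) + ((-3 : ℂ)/2) * z ^ 5 * (s₂ : ℂ) ^ 2) * W s₁ y ^ 4 + (((-3 : ℂ)/2) * z ^ 2 + ((-3 : ℂ)/4) * z ^ 4 * (s₂ : ℂ)) * W s₁ y ^ 5 + (((-1 : ℂ)/2) * z ^ 3 + ((-1 : ℂ)/2) * z ^ 5 * (s₂ : ℂ))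 * W s₁ y ^ 6 + (((-1 : ℂ)/8) * z ^ 4) * W s₁ y ^ 7 + (((-1 : ℂ)/16) * z ^ 5) * W s₁ y ^ 8

noncomputable def DP3 (s₁ s₂ : ℝ) (z : ℂ) (y : ℝ) : ℂ :=
  ((6 : ℂ) * (s₂ : ℂ) + (6 : ℂ) * z ^ 2 * (s₂ : ℂ) ^ 2 + (-1 : ℂ) * z ^ 4 * (s₂ : ℂ) ^ 3) + ((12 : ℂ) * z * (s₂ : ℂ) + (-4 : ℂ) * z ^ 5 * (s₂ : ℂ) ^ 3) * W s₁ y + ((-9 : ℂ) + ((-9 : ℂ)/2) * z ^ 4 * (s₂ : ℂ) ^ 2) * W s₁ y ^ 2 + ((-12 : ℂ) * z + (-6 : ℂ) * z ^ 3 * (s₂ : ℂ) + (-6 : ℂ) * z ^ 5 * (s₂ : ℂ) ^ 2) * W s₁ y ^ 3 + (((-15 : ℂ)/2) * z ^ 2 + ((-15 : ℂ)/4) * z ^ 4 * (s₂ : ℂ)) * W s₁ y ^ 4 + ((-3 : ℂ) * z ^ 3 + (-3 : ℂ) * z ^ 5 * (s₂ : ℂ)) * W s₁ y ^ 5 + (((-7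 : ℂ)/8) * z ^ 4) * W s₁ y ^ 6 + (((-1 : ℂ)/2) * z ^ 5) * W s₁ y ^ 7

noncomputable def G0 (s₁ s₂ : ℝ) (z : ℂ) (y : ℝ) : ℂ :=
  P0 s₁ s₂ z y * Ee z y / (Tc s₁ s₂ y ^ 1 * z ^ 2)

noncomputable def G1 (s₁ s₂ : ℝ) (z : ℂ) (y : ℝ) : ℂ :=
  P1 s₁ s₂ z y * Ee z y / (Tc s₁ s₂ y ^ 2 * z ^ 2)

noncomputable def G2 (s₁ s₂ : ℝ) (z : ℂ) (y : ℝ) : ℂ :=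
  P2 s₁ s₂ z y * Ee z y / (Tc s₁ s₂ y ^ 3 * z ^ 2)

noncomputable def G3 (s₁ s₂ : ℝ) (z : ℂ) (y : ℝ) : ℂ :=
  P3 s₁ s₂ z y * Ee z y / (Tc s₁ s₂ y ^ 4 * z ^ 2)


theorem hD_congr {f : ℝ → ℂ} {a b : ℂ} {x : ℝ} (h : HasDerivAt f a x) (e : a = b) :
    HasDerivAt f b x := e ▸ h

theorem hpow {f : ℝ → ℂ} {f' : ℂ} {y : ℝ} (n : ℕ) (h : HasDerivAt f f' y) :
    HasDerivAt (fun x => f x ^ n) ((n : ℂ) * f y ^ (n - 1) * f') y := by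
  induction n with
  | zero => simpa using hasDerivAt_const y (1 : ℂ)
  | succ m ih =>
    have h2 : HasDerivAt (fun x => f x ^ m * f x) _ y := ih.mul h
    have hfe : (fun x => f x ^ m * f x) = fun x => f x ^ (m + 1) :=
      funext fun x => (pow_succ _ _).symm
    rw [hfe] at h2
    refine hD_congr h2 ?_
    rcases m with _ | k
    · simp
    · simp only [Nat.add_sub_cancel]
      push_cast
      ring

theorem hW (s₁ : ℝ) (y : ℝ) : HasDerivAt (W s₁) 1 y := by
  have h : HasDerivAt (fun y : ℝ => ((y : ℝ) : ℂ)) 1 y := by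
    simpa using (hasDerivAt_id y).ofReal_comp
  exact h.const_add ((s₁ : ℂ))

theorem hTc (s₁ s₂ : ℝ) (y : ℝ) : HasDerivAt (Tc s₁ s₂) (W s₁ y) y := by
  have h := (((hpow 2 (hW s₁ y)).div_const 2).add_const ((s₂ : ℂ)))
  exact hD_congr h (by push_cast; ring)

theorem hE (z : ℂ) (y : ℝ) : HasDerivAt (Ee z) (-z * Ee z y) y := by
  have h0 : HasDerivAt (fun y : ℝ => ((y : ℝ) : ℂ)) 1 y := by
    simpa using (hasDerivAt_id y).ofReal_comp
  have h := ((h0.mul_const z).neg).cexp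
  exact hD_congr h (by simp [Ee]; ring)

theorem hP0 (s₁ s₂ : ℝ) (z : ℂ) (y : ℝ) :
    HasDerivAt (P0 s₁ s₂ z) (DP0 s₁ s₂ z y) y := by
  have h := (((hasDerivAt_const y ((1 : ℂ) + (1 : ℂ) * z ^ 2 * (s₂ : ℂ))).add ((hW s₁ y).const_mul ((1 : ℂ) * z))).add ((hpow 2 (hW s₁ y)).const_mul (((1 : ℂ)/2) * z ^ 2)))
  exact hD_congr h (by simp only [DP0]; push_cast; ring)

theorem hP1 (s₁ s₂ : ℝ) (z : ℂ) (y : ℝ) :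
    HasDerivAt (P1 s₁ s₂ z) (DP1 s₁ s₂ z y) y := by
  have h := (((((hasDerivAt_const y ((-1 : ℂ) * z ^ 3 * (s₂ : ℂ) ^ 2)).add ((hW s₁ y).const_mul ((-1 : ℂ) + (-1 : ℂ) * z ^ 2 * (s₂ : ℂ)))).add ((hpow 2 (hW s₁ y)).const_mul ((-1 : ℂ) * z + (-1 : ℂ) * z ^ 3 * (s₂ : ℂ)))).add ((hpow 3 (hW s₁ y)).const_mul (((-1 : ℂ)/2) * z ^ 2))).add ((hpow 4 (hW s₁ y)).const_mul (((-1 : ℂ)/4) * z ^ 3)))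
  exact hD_congr h (by simp only [DP1]; push_cast; ring)

theorem hP2 (s₁ s₂ : ℝ) (z : ℂ) (y : ℝ) :
    HasDerivAt (P2 s₁ s₂ z) (DP2 s₁ s₂ z y) y := by
  have h := (((((((hasDerivAt_const y ((-1 : ℂ) * (s₂ : ℂ) + (-1 : ℂ) * z ^ 2 * (s₂ : ℂ) ^ 2 + (1 : ℂ) * z ^ 4 * (s₂ : ℂ) ^ 3)).add ((hW s₁ y).const_mul ((-1 : ℂ) * z * (s₂ : ℂ) + (1 : ℂ) * z ^ 3 * (s₂ : ℂ) ^ 2))).add ((hpow 2 (hW s₁ y)).const_mul (((3 : ℂ)/2) + (1 : ℂ) * z ^ 2 * (s₂ : ℂ) + ((3 : ℂ)/2) * z ^ 4 * (s₂ : ℂ) ^ 2))).add ((hpow 3 (hW s₁ y)).const_mul (((3 : ℂ)/2) * z + (1 : ℂ) * z ^ 3 * (s₂ : ℂ)))).add ((hpow 4 (hW s₁ y)).const_mul (((3 : ℂ)/4) * z ^ 2 + ((3 : ℂ)/4) * z ^ 4 * (s₂ : ℂ)))).add ((hpow 5 (hW s₁ y)).const_mul (((1 : ℂ)/4) * z ^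 3))).add ((hpow 6 (hW s₁ y)).const_mul (((1 : ℂ)/8) * z ^ 4)))
  exact hD_congr h (by simp only [DP2]; push_cast; ring)

theorem hP3 (s₁ s₂ : ℝ) (z : ℂ) (y : ℝ) :
    HasDerivAt (P3 s₁ s₂ z) (DP3 s₁ s₂ z y) y := by
  have h := (((((((((hasDerivAt_const y ((2 : ℂ) * z ^ 3 * (s₂ : ℂ) ^ 3 + (-1 : ℂ) * z ^ 5 * (s₂ : ℂ) ^ 4)).add ((hW s₁ y).const_mul ((6 : ℂ) * (s₂ : ℂ) + (6 : ℂ) * z ^ 2 * (s₂ : ℂ) ^ 2 + (-1 : ℂ) * z ^ 4 * (s₂ : ℂ) ^ 3))).add ((hpow 2 (hW s₁ y)).const_mul ((6 : ℂ) * z * (s₂ : ℂ) + (-2 : ℂ) * z ^ 5 * (s₂ : ℂ) ^ 3))).add ((hpow 3 (hW s₁ y)).const_mul ((-3 : ℂ) + ((-3 : ℂ)/2) * z ^ 4 * (s₂ : ℂ) ^ 2))).add ((hpow 4 (hW s₁ y)).const_mul ((-3 : ℂ) * z + ((-3 : ℂ)/2) * z ^ 3 * (s₂ : ℂ) + ((-3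 : ℂ)/2) * z ^ 5 * (s₂ : ℂ) ^ 2))).add ((hpow 5 (hW s₁ y)).const_mul (((-3 : ℂ)/2) * z ^ 2 + ((-3 : ℂ)/4) * z ^ 4 * (s₂ : ℂ)))).add ((hpow 6 (hW s₁ y)).const_mul (((-1 : ℂ)/2) * z ^ 3 + ((-1 : ℂ)/2) * z ^ 5 * (s₂ : ℂ)))).add ((hpow 7 (hW s₁ y)).const_mul (((-1 : ℂ)/8) * z ^ 4))).add ((hpow 8 (hW s₁ y)).const_mul (((-1 : ℂ)/16) * z ^ 5)))
  exact hD_congr h (by simp only [DP3]; push_cast; ring)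

theorem hG0 (s₁ s₂ : ℝ) (z : ℂ) (y : ℝ) (hz : z ≠ 0) (hT : Tc s₁ s₂ y ≠ 0) :
    HasDerivAt (G0 s₁ s₂ z) (G1 s₁ s₂ z y) y := by
  have hden : Tc s₁ s₂ y ^ 1 * z ^ 2 ≠ 0 := by
    exact mul_ne_zero (pow_ne_zero _ hT) (pow_ne_zero _ hz)
  have h := HasDerivAt.div ((hP0 s₁ s₂ z y).mul (hE z y))
    ((hpow 1 (hTc s₁ s₂ y)).mul_const (z ^ 2)) hden
  refine hD_congr h ?_
  have hT' : W s₁ y ^ 2 / 2 + (s₂ : ℂ) ≠ 0 := hT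
  have hA : ((W s₁ y ^ 2 / 2 + (s₂ : ℂ)) ^ 1 * z ^ 2) ^ 2 ≠ 0 :=
    pow_ne_zero _ (mul_ne_zero (pow_ne_zero _ hT') (pow_ne_zero _ hz))
  have hB : (W s₁ y ^ 2 / 2 + (s₂ : ℂ)) ^ 2 * z ^ 2 ≠ 0 :=
    mul_ne_zero (pow_ne_zero _ hT') (pow_ne_zero _ hz)
  simp only [G1, P0, DP0, P1, Tc, Pi.mul_apply]
  rw [div_eq_div_iff hA hB]
  push_cast
  ring

theorem hG1 (s₁ s₂ : ℝ) (z : ℂ) (y : ℝ) (hz : z ≠ 0) (hT : Tc s₁ s₂ y ≠ 0) :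
    HasDerivAt (G1 s₁ s₂ z) (G2 s₁ s₂ z y) y := by
  have hden : Tc s₁ s₂ y ^ 2 * z ^ 2 ≠ 0 := by
    exact mul_ne_zero (pow_ne_zero _ hT) (pow_ne_zero _ hz)
  have h := HasDerivAt.div ((hP1 s₁ s₂ z y).mul (hE z y))
    ((hpow 2 (hTc s₁ s₂ y)).mul_const (z ^ 2)) hden
  refine hD_congr h ?_
  have hT' : W s₁ y ^ 2 / 2 + (s₂ : ℂ) ≠ 0 := hT
  have hA : ((W s₁ y ^ 2 / 2 + (s₂ : ℂ)) ^ 2 * z ^ 2) ^ 2 ≠ 0 :=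
    pow_ne_zero _ (mul_ne_zero (pow_ne_zero _ hT') (pow_ne_zero _ hz))
  have hB : (W s₁ y ^ 2 / 2 + (s₂ : ℂ)) ^ 3 * z ^ 2 ≠ 0 :=
    mul_ne_zero (pow_ne_zero _ hT') (pow_ne_zero _ hz)
  simp only [G2, P1, DP1, P2, Tc, Pi.mul_apply]
  rw [div_eq_div_iff hA hB]
  push_cast
  ring

theorem hG2 (s₁ s₂ : ℝ) (z : ℂ) (y : ℝ) (hz : z ≠ 0) (hT : Tc s₁ s₂ y ≠ 0) :
    HasDerivAt (G2 s₁ s₂ z) (G3 s₁ s₂ z y) y := by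
  have hden : Tc s₁ s₂ y ^ 3 * z ^ 2 ≠ 0 := by
    exact mul_ne_zero (pow_ne_zero _ hT) (pow_ne_zero _ hz)
  have h := HasDerivAt.div ((hP2 s₁ s₂ z y).mul (hE z y))
    ((hpow 3 (hTc s₁ s₂ y)).mul_const (z ^ 2)) hden
  refine hD_congr h ?_
  have hT' : W s₁ y ^ 2 / 2 + (s₂ : ℂ) ≠ 0 := hT
  have hA : ((W s₁ y ^ 2 / 2 + (s₂ : ℂ)) ^ 3 * z ^ 2) ^ 2 ≠ 0 :=
    pow_ne_zero _ (mul_ne_zero (pow_ne_zero _ hT') (pow_ne_zero _ hz))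
  have hB : (W s₁ y ^ 2 / 2 + (s₂ : ℂ)) ^ 4 * z ^ 2 ≠ 0 :=
    mul_ne_zero (pow_ne_zero _ hT') (pow_ne_zero _ hz)
  simp only [G3, P2, DP2, P3, Tc, Pi.mul_apply]
  rw [div_eq_div_iff hA hB]
  push_cast
  ring

/-- Example 7.3: with `τ(x) = (s₁+x)²/2 + s₂`, `u₁ = -3((x+s₁)² - 2s₂)/(2τ²)`,
`u₀ = -6s₂(x+s₁)/τ³`, and adjoint wave function
`Ψ*(x,z) = (1 + (s₁+x)/(τ(x) z) + 1/(τ(x) z²)) e^{-xz}`, one has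
`-Ψ*''' - u₁ Ψ*' + (u₀ - u₁') Ψ* = z³ Ψ*` for every `z ≠ 0` and every `x` with
`τ(x) ≠ 0`. -/
theorem stmt_17 (s₁ s₂ : ℝ) (τ u₀ u₁ : ℝ → ℝ)
    (hτ : ∀ x : ℝ, τ x = (s₁ + x) ^ 2 / 2 + s₂)
    (hu₁ : ∀ x : ℝ, u₁ x = -3 * ((x + s₁) ^ 2 - 2 * s₂) / (2 * (τ x) ^ 2))
    (hu₀ : ∀ x : ℝ, u₀ x = -6 * s₂ * (x + s₁) / (τ x) ^ 3)
    (Ψs : ℝ → ℂ → ℂ)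
    (hΨs : ∀ (x : ℝ) (z : ℂ),
      Ψs x z = (1 + ((s₁ : ℂ) + (x : ℂ)) / ((τ x : ℂ) * z) + 1 / ((τ x : ℂ) * z ^ 2)) *
        Complex.exp (-((x : ℂ) * z))) :
    ∀ z : ℂ, z ≠ 0 → ∀ x : ℝ, τ x ≠ 0 →
      -iteratedDeriv 3 (fun x' => Ψs x' z) x - (u₁ x : ℂ) * deriv (fun x' => Ψs x' z) x +
          ((u₀ x : ℂ) - (Complex.ofReal (deriv u₁ x))) * Ψs x z = z ^ 3 * Ψs x z := by
  intro z hz x hτx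
  -- τ and Tc agree (as complex numbers)
  have hτT : ∀ y : ℝ, ((τ y : ℝ) : ℂ) = Tc s₁ s₂ y := by
    intro y; rw [hτ y]; simp only [Tc, W]; push_cast; ring
  have hTx : Tc s₁ s₂ x ≠ 0 := by
    rw [← hτT x]; exact_mod_cast Complex.ofReal_ne_zero.mpr hτx
  -- the set where Tc ≠ 0 is open
  have hcont : Continuous (Tc s₁ s₂) := by
    unfold Tc W; fun_prop
  have hev : ∀ᶠ y in nhds x, Tc s₁ s₂ y ≠ 0 := by
    have hopen : IsOpen {y : ℝ | Tc s₁ s₂ y ≠ 0} :=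
      IsOpen.preimage hcont isOpen_ne
    exact Filter.eventually_of_mem (hopen.mem_nhds hTx) fun y hy => hy
  -- Ψs agrees with G0 near x
  have hFG : (fun y => Ψs y z) =ᶠ[nhds x] G0 s₁ s₂ z := by
    refine hev.mono fun y hy => ?_
    show Ψs y z = G0 s₁ s₂ z y
    rw [hΨs y z, hτT y, show ((s₁ : ℂ) + (y : ℂ)) = W s₁ y from rfl]
    simp only [G0, Ee]
    rw [show P0 s₁ s₂ z y = Tc s₁ s₂ y * z ^ 2 + W s₁ y * z + 1 by
      simp only [P0, Tc]; ring]
    field_simp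
  -- derivative chain
  have h1 : deriv (fun y => Ψs y z) =ᶠ[nhds x] G1 s₁ s₂ z :=
    hFG.deriv.trans (hev.mono fun y hy => (hG0 s₁ s₂ z y hz hy).deriv)
  have h2 : deriv (deriv (fun y => Ψs y z)) =ᶠ[nhds x] G2 s₁ s₂ z :=
    h1.deriv.trans (hev.mono fun y hy => (hG1 s₁ s₂ z y hz hy).deriv)
  have h3 : deriv (deriv (deriv (fun y => Ψs y z))) =ᶠ[nhds x] G3 s₁ s₂ z :=
    h2.deriv.trans (hev.mono fun y hy => (hG2 s₁ s₂ z y hz hy).deriv)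
  have hit : iteratedDeriv 3 (fun x' => Ψs x' z) x = G3 s₁ s₂ z x := by
    rw [show (3 : ℕ) = 2 + 1 from rfl, iteratedDeriv_succ,
      show (2 : ℕ) = 1 + 1 from rfl, iteratedDeriv_succ,
      show (1 : ℕ) = 0 + 1 from rfl, iteratedDeriv_succ, iteratedDeriv_zero]
    exact h3.eq_of_nhds
  have hd1 : deriv (fun x' => Ψs x' z) x = G1 s₁ s₂ z x := h1.eq_of_nhds
  have hΨx : Ψs x z = G0 s₁ s₂ z x := hFG.eq_of_nhds
  -- derivative of u₁
  have hu₁eq : u₁ = fun y : ℝ =>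
      -3 * ((y + s₁) ^ 2 - 2 * s₂) / (2 * ((s₁ + y) ^ 2 / 2 + s₂) ^ 2) := by
    funext y; rw [hu₁ y, hτ y]
  have hτr : (s₁ + x) ^ 2 / 2 + s₂ ≠ 0 := by rw [← hτ x]; exact hτx
  have hdu₁ : deriv u₁ x =
      3 * (s₁ + x) * ((s₁ + x) ^ 2 - 6 * s₂) / (2 * ((s₁ + x) ^ 2 / 2 + s₂) ^ 3) := by
    rw [hu₁eq]
    have hnum : HasDerivAt (fun y : ℝ => -3 * ((y + s₁) ^ 2 - 2 * s₂))
        (-3 * (2 * (x + s₁) ^ 1 * 1)) x :=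
      ((((hasDerivAt_id x).add_const s₁).pow 2).sub_const (2 * s₂)).const_mul (-3)
    have hden : HasDerivAt (fun y : ℝ => 2 * ((s₁ + y) ^ 2 / 2 + s₂) ^ 2)
        (2 * (2 * ((s₁ + x) ^ 2 / 2 + s₂) ^ 1 * (2 * (s₁ + x) ^ 1 * 1 / 2))) x :=
      (((((hasDerivAt_id x).const_add s₁).pow 2).div_const 2).add_const s₂ |>.pow 2).const_mul 2
    have hden1 : 2 * ((s₁ + x) ^ 2 / 2 + s₂) ^ 2 ≠ 0 :=
      mul_ne_zero two_ne_zero (pow_ne_zero _ hτr)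
    have hq : HasDerivAt (fun y : ℝ => -3 * ((y + s₁) ^ 2 - 2 * s₂) / (2 * ((s₁ + y) ^ 2 / 2 + s₂) ^ 2)) _ x :=
      hnum.div hden hden1
    rw [hq.deriv, div_eq_div_iff (pow_ne_zero 2 hden1)
      (mul_ne_zero two_ne_zero (pow_ne_zero _ hτr))]
    ring
  -- coercion computations, with `W` and `Tc` kept atomic
  have hTc' : ((s₁ : ℂ) + (x : ℂ)) ^ 2 / 2 + (s₂ : ℂ) ≠ 0 := hTx
  have hWTc : ∀ (k : ℕ) (c : ℝ), (2 * ((s₁ + x) ^ 2 / 2 + s₂) ^ k : ℝ) ≠ 0 :=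
    fun k _ => mul_ne_zero two_ne_zero (pow_ne_zero _ hτr)
  have hc1 : ((u₁ x : ℝ) : ℂ) =
      -3 * (W s₁ x ^ 2 - 2 * (s₂ : ℂ)) / (2 * Tc s₁ s₂ x ^ 2) := by
    rw [hu₁ x, hτ x]
    push_cast
    simp only [Tc, W]
    rw [div_eq_div_iff (mul_ne_zero two_ne_zero (pow_ne_zero _ hTc'))
      (mul_ne_zero two_ne_zero (pow_ne_zero _ hTc'))]
    ring
  have hc0 : ((u₀ x : ℝ) : ℂ) =
      -6 * (s₂ : ℂ) * W s₁ x / Tc s₁ s₂ x ^ 3 := by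
    rw [hu₀ x, hτ x]
    push_cast
    simp only [Tc, W]
    rw [div_eq_div_iff (pow_ne_zero _ hTc') (pow_ne_zero _ hTc')]
    ring
  have hcd : ((deriv u₁ x : ℝ) : ℂ) =
      3 * W s₁ x * (W s₁ x ^ 2 - 6 * (s₂ : ℂ)) / (2 * Tc s₁ s₂ x ^ 3) := by
    rw [hdu₁]
    push_cast
    simp only [Tc, W]
  rw [hit, hd1, hΨx, hc1, hc0, hcd]
  simp only [G0, G1, G3]
  have key : -(P3 s₁ s₂ z x) + 3 / 2 * (W s₁ x ^ 2 - 2 * (s₂ : ℂ)) * P1 s₁ s₂ z x -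
      3 / 2 * W s₁ x * (W s₁ x ^ 2 - 2 * (s₂ : ℂ)) * P0 s₁ s₂ z x =
      z ^ 3 * Tc s₁ s₂ x ^ 3 * P0 s₁ s₂ z x := by
    simp only [P0, P1, P3, Tc]; ring
  set T := Tc s₁ s₂ x
  set Wx := W s₁ x
  set E := Ee z x
  set p0 := P0 s₁ s₂ z x
  set p1 := P1 s₁ s₂ z x
  set p3 := P3 s₁ s₂ z x
  have hT : T ≠ 0 := hTx
  have hD : (2 : ℂ) * T ^ 4 * z ^ 2 ≠ 0 :=
    mul_ne_zero (mul_ne_zero two_ne_zero (pow_ne_zero _ hT)) (pow_ne_zero _ hz)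
  have hne : ∀ (a b : ℕ), T ^ a * z ^ b ≠ 0 :=
    fun a b => mul_ne_zero (pow_ne_zero _ hT) (pow_ne_zero _ hz)
  have e1 : p3 * E / (T ^ 4 * z ^ 2) = 2 * p3 * E / (2 * T ^ 4 * z ^ 2) := by
    rw [div_eq_div_iff (hne 4 2) hD]; ring
  have e2 : -3 * (Wx ^ 2 - 2 * (s₂ : ℂ)) / (2 * T ^ 2) * (p1 * E / (T ^ 2 * z ^ 2)) =
      -3 * (Wx ^ 2 - 2 * (s₂ : ℂ)) * (p1 * E) / (2 * T ^ 4 * z ^ 2) := by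
    rw [div_mul_div_comm, div_eq_div_iff (by
      exact mul_ne_zero (mul_ne_zero two_ne_zero (pow_ne_zero _ hT)) (hne 2 2)) hD]
    ring
  have e3 : (-6 * (s₂ : ℂ) * Wx / T ^ 3 - 3 * Wx * (Wx ^ 2 - 6 * (s₂ : ℂ)) / (2 * T ^ 3)) *
      (p0 * E / (T ^ 1 * z ^ 2)) =
      (-12 * (s₂ : ℂ) * Wx - 3 * Wx * (Wx ^ 2 - 6 * (s₂ : ℂ))) * (p0 * E) /
        (2 * T ^ 4 * z ^ 2) := by
    rw [div_sub_div _ _ (pow_ne_zero 3 hT) (mul_ne_zero two_ne_zero (pow_ne_zero 3 hT)),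
      div_mul_div_comm, div_eq_div_iff (by
        exact mul_ne_zero (mul_ne_zero (pow_ne_zero _ hT)
          (mul_ne_zero two_ne_zero (pow_ne_zero _ hT))) (hne 1 2)) hD]
    ring
  have e4 : z ^ 3 * (p0 * E / (T ^ 1 * z ^ 2)) =
      2 * z ^ 3 * T ^ 3 * p0 * E / (2 * T ^ 4 * z ^ 2) := by
    rw [mul_div_assoc', div_eq_div_iff (hne 1 2) hD]; ring
  rw [e1, e2, e3, e4, ← neg_div, div_sub_div_same, ← add_div]
  congr 1
  linear_combination 2 * E * key
end
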